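/- arXiv:0903.2675 — 11 statements merged into one kernel-verified Lean document; each statement's English description precedes it below -/
import Mathlib

section
/- For all integers 0 ≤ r ≤ n and prime power q ≥ 2, the Gaussian binomial coefficient satisfies [n choose r]_q < q^{r(n-r)} / K_q, where K_q = ∏_{j=1}^∞ (1 - q^{-j}). -/
/-- The Gaussian binomial coefficient `[n choose r]_q = ∏_{i=0}^{r-1} (q^n - q^i)/(q^r - q^i)`. -/
noncomputable def gaussBinom (q n r : ℕ) : ℝ :=
  ∏ i ∈ Finset.range r, (((q : ℝ) ^ n - (q : ℝ) ^ i) / ((q : ℝ) ^ r - (q : ℝ) ^ i))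

/-- `K_q = ∏_{j=1}^∞ (1 - q^{-j})`. -/
noncomputable def Kq (q : ℕ) : ℝ := ∏' j : ℕ, (1 - ((q : ℝ))⁻¹ ^ (j + 1))

theorem gaussBinom_upper_bound (q n r : ℕ) (hr : r ≤ n)
    (hpp : ∃ p k : ℕ, p.Prime ∧ 0 < k ∧ q = p ^ k) (hq : 2 ≤ q) :
    gaussBinom q n r < (q : ℝ) ^ (r * (n - r)) / Kq q := by
  have hQ2 : (2:ℝ) ≤ (q:ℝ) := by exact_mod_cast hq
  have hQ1 : (1:ℝ) < (q:ℝ) := by linarith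
  have hQ0 : (0:ℝ) < (q:ℝ) := by linarith
  set Q : ℝ := (q:ℝ) with hQdef
  set f : ℕ → ℝ := fun j => 1 - (Q⁻¹) ^ (j + 1) with hfdef
  have hinv0 : 0 ≤ Q⁻¹ := by positivity
  have hinv : Q⁻¹ ≤ 2⁻¹ := by
    rw [inv_le_inv₀ hQ0 (by norm_num)]; exact hQ2
  have hbound : ∀ j : ℕ, Q⁻¹ ^ (j + 1) ≤ 2⁻¹ ^ (j + 1) := fun j =>
    pow_le_pow_left₀ hinv0 hinv _
  have hhalfle : ∀ j : ℕ, (2:ℝ)⁻¹ ^ (j + 1) ≤ 2⁻¹ := fun j => by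
    calc (2:ℝ)⁻¹ ^ (j + 1) ≤ 2⁻¹ ^ 1 :=
          pow_le_pow_of_le_one (by norm_num) (by norm_num) (by omega)
      _ = 2⁻¹ := pow_one _
  have hfle : ∀ j : ℕ, Q⁻¹ ^ (j + 1) ≤ 2⁻¹ := fun j => (hbound j).trans (hhalfle j)
  have hfpos : ∀ j, 0 < f j := by
    intro j
    simp only [hfdef]
    have h2 : Q⁻¹ ^ (j + 1) < 1 := lt_of_le_of_lt (hfle j) (by norm_num)
    linarith
  have hfhalf : ∀ j, (2:ℝ)⁻¹ ≤ f j := by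
    intro j
    simp only [hfdef]
    have := hfle j
    have h2 : (2:ℝ)⁻¹ + 2⁻¹ = 1 := by norm_num
    linarith
  have hflt1 : ∀ j, f j < 1 := by
    intro j
    have : (0:ℝ) < Q⁻¹ ^ (j + 1) := by positivity
    simp only [hfdef]; linarith
  have hlognonpos : ∀ j, Real.log (f j) ≤ 0 := fun j =>
    Real.log_nonpos (hfpos j).le (hflt1 j).le
  -- summability of logs
  have hgeo : Summable (fun j : ℕ => (4:ℝ) * 2⁻¹ ^ (j + 1)) := by
    have h : Summable fun j : ℕ => ((2:ℝ)⁻¹) ^ j :=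
      summable_geometric_of_lt_one (by norm_num) (by norm_num)
    exact (h.mul_left 2).congr fun j => by rw [pow_succ]; ring
  have hsum : Summable fun j => Real.log (f j) := by
    rw [← summable_neg_iff]
    apply Summable.of_nonneg_of_le (fun j => by simpa using hlognonpos j) ?_ hgeo
    · intro j
      have h1 : -Real.log (f j) = Real.log (f j)⁻¹ := (Real.log_inv _).symm
      rw [h1]
      have h2 : Real.log (f j)⁻¹ ≤ (f j)⁻¹ - 1 :=
        Real.log_le_sub_one_of_pos (inv_pos.2 (hfpos j))
      have h3 : (f j)⁻¹ ≤ 2 := by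
        rw [inv_le_comm₀ (hfpos j) (by norm_num)]
        simpa using hfhalf j
      have h4 : (f j)⁻¹ - 1 ≤ 2 * (1 - f j) := by
        nlinarith [mul_nonneg (sub_nonneg.2 h3) (sub_nonneg.2 (hflt1 j).le),
          mul_inv_cancel₀ (hfpos j).ne']
      have h5 : 1 - f j = Q⁻¹ ^ (j + 1) := by simp [hfdef]
      have h6 := hbound j
      have h7 : (0:ℝ) ≤ 2⁻¹ ^ (j+1) := by positivity
      nlinarith
  -- Kq as exponential
  have hKprod : HasProd f (Real.exp (∑' j, Real.log (f j))) := by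
    apply (hsum.hasSum.rexp).congr
    intro s
    exact Finset.prod_congr rfl fun i _ => Real.exp_log (hfpos i)
  have hK : Kq q = Real.exp (∑' j, Real.log (f j)) := hKprod.tprod_eq.symm ▸ rfl
  have hKpos : 0 < Kq q := by rw [hK]; exact Real.exp_pos _
  have htailnonpos : ∀ m : ℕ, (∑' j, Real.log (f (j + m))) ≤ 0 := fun m =>
    tsum_nonpos fun j => hlognonpos _
  have hKle : ∀ m : ℕ, Kq q ≤ ∏ j ∈ Finset.range m, f j := by
    intro m
    have h1 : (∑ j ∈ Finset.range m, Real.log (f j)) + ∑' j, Real.log (f (j + m))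
        = ∑' j, Real.log (f j) := hsum.sum_add_tsum_nat_add m
    rw [hK, ← h1, Real.exp_add, Real.exp_sum]
    have h2 : ∏ j ∈ Finset.range m, Real.exp (Real.log (f j))
        = ∏ j ∈ Finset.range m, f j :=
      Finset.prod_congr rfl fun j _ => Real.exp_log (hfpos j)
    rw [h2]
    exact mul_le_of_le_one_right
      (Finset.prod_nonneg fun j _ => (hfpos j).le)
      (Real.exp_le_one_iff.2 (htailnonpos m))
  have hKlt1 : Kq q < 1 := by
    rw [hK]
    apply Real.exp_lt_one_iff.2
    have h1 : (∑ j ∈ Finset.range 1, Real.log (f j)) + ∑' j, Real.log (f (j + 1))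
        = ∑' j, Real.log (f j) := hsum.sum_add_tsum_nat_add 1
    have h2 : Real.log (f 0) < 0 := Real.log_neg (hfpos 0) (hflt1 0)
    have h3 := htailnonpos 1
    rw [← h1]; simp only [Finset.range_one, Finset.sum_singleton]; linarith
  rcases Nat.eq_zero_or_pos r with hr0 | hrpos
  · subst hr0
    simp only [gaussBinom, Finset.range_zero, Finset.prod_empty, Nat.zero_mul, pow_zero]
    rw [lt_div_iff₀ hKpos]; linarith
  -- main case r ≥ 1
  have hprod_pos : ∀ i ∈ Finset.range r, 0 < Q ^ r - Q ^ i := by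
    intro i hi
    have hi' : i < r := Finset.mem_range.1 hi
    have := pow_lt_pow_right₀ hQ1 hi'
    linarith
  have step1 : gaussBinom q n r < ∏ i ∈ Finset.range r, Q ^ n / (Q ^ r - Q ^ i) := by
    apply Finset.prod_lt_prod_of_nonempty
    · intro i hi
      have hi' : i < r := Finset.mem_range.1 hi
      have hin : i < n := lt_of_lt_of_le hi' hr
      have h1 := pow_lt_pow_right₀ hQ1 hin
      exact div_pos (by linarith) (hprod_pos i hi)
    · intro i hi
      have hnum : Q ^ n - Q ^ i < Q ^ n := by
        have : (0:ℝ) < Q ^ i := by positivity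
        linarith
      exact div_lt_div_of_pos_right hnum (hprod_pos i hi)
    · exact Finset.nonempty_range_iff.2 (by omega)
  have hfac : ∀ i ∈ Finset.range r, Q ^ r - Q ^ i = Q ^ r * f (r - 1 - i) := by
    intro i hi
    have hi' : i < r := Finset.mem_range.1 hi
    have he : r - 1 - i + 1 = r - i := by omega
    have hsplit : Q ^ i * Q ^ (r - i) = Q ^ r := by
      rw [← pow_add]; congr 1; omega
    have hQr : Q ^ (r - i) ≠ 0 := by positivity
    simp only [hfdef, he, inv_pow]
    field_simp
    linarith [hsplit]
  have step2 : ∏ i ∈ Finset.range r, Q ^ n / (Q ^ r - Q ^ i)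
      = Q ^ (r * (n - r)) / ∏ j ∈ Finset.range r, f j := by
    rw [Finset.prod_div_distrib, Finset.prod_congr rfl hfac, Finset.prod_mul_distrib,
      Finset.prod_const, Finset.prod_const, Finset.card_range]
    have hrefl : ∏ i ∈ Finset.range r, f (r - 1 - i) = ∏ j ∈ Finset.range r, f j :=
      Finset.prod_range_reflect f r
    rw [hrefl, ← pow_mul, ← pow_mul]
    have hexp : n * r = r * (n - r) + r * r := by
      have := Nat.sub_add_cancel hr
      calc n * r = r * n := Nat.mul_comm n r
        _ = r * ((n - r) + r) := by rw [Nat.sub_add_cancel hr]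
        _ = r * (n - r) + r * r := Nat.mul_add r _ _
    rw [hexp, pow_add]
    have hfprodpos : 0 < ∏ j ∈ Finset.range r, f j :=
      Finset.prod_pos fun j _ => hfpos j
    field_simp
  have step3 : Q ^ (r * (n - r)) / ∏ j ∈ Finset.range r, f j
      ≤ Q ^ (r * (n - r)) / Kq q :=
    div_le_div_of_nonneg_left (by positivity) hKpos (hKle r)
  calc gaussBinom q n r < ∏ i ∈ Finset.range r, Q ^ n / (Q ^ r - Q ^ i) := step1
    _ = Q ^ (r * (n - r)) / ∏ j ∈ Finset.range r, f j := step2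
    _ ≤ Q ^ (r * (n - r)) / Kq q := step3
end

section
/- The injection distance d_I(U,V) = dim(U+V) - min(dim U, dim V) defines a metric on the set of all subspaces of a finite-dimensional vector space over a field. -/
/-- The injection distance `d_I(U,V) = dim(U+V) - min(dim U, dim V)`. -/
noncomputable def dI {F W : Type*} [Field F] [AddCommGroup W] [Module F W]
    (U V : Submodule F W) : ℕ :=
  Module.finrank F ↥(U ⊔ V) - min (Module.finrank F ↥U) (Module.finrank F ↥V)

/-- The injection distance is a metric on the set of subspaces of a
finite-dimensional vector space. -/
theorem dI_is_metric (F W : Type*) [Field F] [AddCommGroup W] [Module F W]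
    [FiniteDimensional F W] :
    (∀ U V : Submodule F W, 0 ≤ dI U V) ∧
    (∀ U V : Submodule F W, dI U V = 0 ↔ U = V) ∧
    (∀ U V : Submodule F W, dI U V = dI V U) ∧
    (∀ U V T : Submodule F W, dI U T ≤ dI U V + dI V T) := by
  refine ⟨fun U V => Nat.zero_le _, ?_, ?_, ?_⟩
  · intro U V
    unfold dI
    constructor
    · intro h
      have hU : Module.finrank F ↥U ≤ Module.finrank F ↥(U ⊔ V) :=
        Submodule.finrank_mono le_sup_left
      have hV : Module.finrank F ↥V ≤ Module.finrank F ↥(U ⊔ V) :=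
        Submodule.finrank_mono le_sup_right
      have h1 : Module.finrank F ↥(U ⊔ V) ≤ Module.finrank F ↥U := by omega
      have h2 : Module.finrank F ↥(U ⊔ V) ≤ Module.finrank F ↥V := by omega
      have e1 : U = U ⊔ V := Submodule.eq_of_le_of_finrank_le le_sup_left h1
      have e2 : V = U ⊔ V := Submodule.eq_of_le_of_finrank_le le_sup_right h2
      exact e1.trans e2.symm
    · rintro rfl
      rw [sup_idem, min_self, Nat.sub_self]
  · intro U V
    unfold dI
    rw [sup_comm, min_comm]
  · intro U V T
    unfold dI
    have key : Module.finrank F ↥(U ⊔ T) + Module.finrank F ↥V ≤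
        Module.finrank F ↥(U ⊔ V) + Module.finrank F ↥(V ⊔ T) := by
      calc Module.finrank F ↥(U ⊔ T) + Module.finrank F ↥V
          ≤ Module.finrank F ↥((U ⊔ V) ⊔ (V ⊔ T)) +
            Module.finrank F ↥((U ⊔ V) ⊓ (V ⊔ T)) := by
            gcongr
            · exact Submodule.finrank_mono
                (sup_le (le_sup_left.trans le_sup_left) (le_sup_right.trans le_sup_right))
            · exact Submodule.finrank_mono (le_inf le_sup_right le_sup_left)
        _ = Module.finrank F ↥(U ⊔ V) + Module.finrank F ↥(V ⊔ T) :=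
            Submodule.finrank_sup_add_finrank_inf_eq _ _
    have hU1 : Module.finrank F ↥U ≤ Module.finrank F ↥(U ⊔ V) :=
      Submodule.finrank_mono le_sup_left
    have hV1 : Module.finrank F ↥V ≤ Module.finrank F ↥(U ⊔ V) :=
      Submodule.finrank_mono le_sup_right
    have hV2 : Module.finrank F ↥V ≤ Module.finrank F ↥(V ⊔ T) :=
      Submodule.finrank_mono le_sup_left
    have hT2 : Module.finrank F ↥T ≤ Module.finrank F ↥(V ⊔ T) :=
      Submodule.finrank_mono le_sup_right
    have hU3 : Module.finrank F ↥U ≤ Module.finrank F ↥(U ⊔ T) :=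
      Submodule.finrank_mono le_sup_left
    have hT3 : Module.finrank F ↥T ≤ Module.finrank F ↥(U ⊔ T) :=
      Submodule.finrank_mono le_sup_right
    omega
end

section
/- For any two subspaces U, V of a finite-dimensional vector space, the subspace distance and injection distance satisfy d_S(U,V) = 2·d_I(U,V) - |dim(U) - dim(V)|, equivalently d_I(U,V) = (1/2)·d_S(U,V) + (1/2)·|dim(U) - dim(V)|. -/
/-- The subspace distance `d_S(U,V) = dim(U+V) - dim(U∩V)`. -/
noncomputable def dS {F W : Type*} [Field F] [AddCommGroup W] [Module F W]
    (U V : Submodule F W) : ℕ :=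
  Module.finrank F ↥(U ⊔ V) - Module.finrank F ↥(U ⊓ V)

/-- Relation between subspace distance and injection distance:
`d_S = 2 d_I - |dim U - dim V|`, equivalently `d_I = d_S/2 + |dim U - dim V|/2`. -/
theorem dS_eq_two_dI_sub_abs (F W : Type*) [Field F] [AddCommGroup W] [Module F W]
    [FiniteDimensional F W] (U V : Submodule F W) :
    (dS U V : ℤ) = 2 * (dI U V : ℤ) - |(Module.finrank F ↥U : ℤ) - (Module.finrank F ↥V : ℤ)| ∧
    2 * (dI U V : ℤ) = (dS U V : ℤ) + |(Module.finrank F ↥U : ℤ) - (Module.finrank F ↥V : ℤ)| := by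
  have key := Submodule.finrank_sup_add_finrank_inf_eq U V
  have h1 : Module.finrank F ↥U ≤ Module.finrank F ↥(U ⊔ V) :=
    Submodule.finrank_mono le_sup_left
  have h2 : Module.finrank F ↥V ≤ Module.finrank F ↥(U ⊔ V) :=
    Submodule.finrank_mono le_sup_right
  unfold dS dI
  rw [abs_sub_comm]
  rcases le_or_gt (Module.finrank F ↥U) (Module.finrank F ↥V) with h | h
  · rw [abs_of_nonneg (by simp; exact_mod_cast h)]
    push_cast [min_eq_left h]
    omega
  · rw [abs_of_nonpos (by simp; exact_mod_cast h.le)]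
    push_cast [min_eq_right h.le]
    omega
end

section
/- Truncating generator matrices cannot increase the subspace distance: let A = (A_1 | A_2) ∈ F^{a×n} and B = (B_1 | B_2) ∈ F^{b×n}, where A_1 ∈ F^{a×n_1} and B_1 ∈ F^{b×n_1} for some 0 ≤ n_1 ≤ n. Then d_S(R(A_1), R(B_1)) ≤ d_S(R(A), R(B)) and d_S(R(A_2), R(B_2)) ≤ d_S(R(A), R(B)). -/
/-- The row space of a matrix: the span of its rows. -/
noncomputable def rowSpace {F ι m : Type*} [Field F] (M : Matrix ι m F) :
    Submodule F (m → F) :=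
  Submodule.span F (Set.range M)

/-- The rank of a matrix, as the dimension of its row space. -/
noncomputable def rk {F ι m : Type*} [Field F] (M : Matrix ι m F) : ℕ :=
  Module.finrank F (rowSpace M)

open Module Submodule in
private lemma finrank_map_add_key {F M N : Type*} [Field F] [AddCommGroup M] [Module F M]
    [FiniteDimensional F M] [AddCommGroup N] [Module F N]
    (f : M →ₗ[F] N) (W : Submodule F M) :
    finrank F (W.map f) + finrank F ↥(LinearMap.ker f ⊓ W) = finrank F W := by
  have h1 := LinearMap.finrank_range_add_finrank_ker (f.domRestrict W)
  rw [LinearMap.range_domRestrict, LinearMap.ker_domRestrict] at h1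
  have h2 : comap W.subtype (LinearMap.ker f) = comap W.subtype (LinearMap.ker f ⊓ W) := by
    rw [comap_inf]; simp
  rw [h2, (comapSubtypeEquivOfLe (inf_le_right : LinearMap.ker f ⊓ W ≤ W)).finrank_eq] at h1
  exact h1

open Module Submodule in
private lemma dS_map_le {F M N : Type*} [Field F] [AddCommGroup M] [Module F M]
    [FiniteDimensional F M] [AddCommGroup N] [Module F N]
    (f : M →ₗ[F] N) (U V : Submodule F M) :
    dS (U.map f) (V.map f) ≤ dS U V := by
  have hsup : U.map f ⊔ V.map f = (U ⊔ V).map f := (Submodule.map_sup _ _ _).symm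
  have hinf : (U ⊓ V).map f ≤ U.map f ⊓ V.map f := Submodule.map_inf_le _
  have k1 := finrank_map_add_key f (U ⊔ V)
  have k2 := finrank_map_add_key f (U ⊓ V)
  have hk : finrank F ↥(LinearMap.ker f ⊓ (U ⊓ V)) ≤ finrank F ↥(LinearMap.ker f ⊓ (U ⊔ V)) :=
    Submodule.finrank_mono (inf_le_inf_left _ (le_trans inf_le_left le_sup_left))
  have hmono : finrank F ↥((U ⊓ V).map f) ≤ finrank F ↥(U.map f ⊓ V.map f) :=
    Submodule.finrank_mono hinf
  unfold dS
  rw [hsup]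
  omega

private lemma rowSpace_map_funLeft {F : Type*} [Field F] {a n₁ n₂ m : Type*}
    (g : m → n₁ ⊕ n₂)
    (M : Matrix a (n₁ ⊕ n₂) F) :
    (rowSpace M).map (LinearMap.funLeft F F g) = rowSpace (fun i => M i ∘ g) := by
  unfold rowSpace
  rw [Submodule.map_span]
  congr 1; ext x; simp [LinearMap.funLeft]
  exact ⟨fun ⟨_, ⟨i, hi⟩, h⟩ => ⟨i, hi ▸ h⟩, fun ⟨i, h⟩ => ⟨M i, ⟨i, rfl⟩, h⟩⟩

/-- Truncating generator matrices cannot increase the subspace distance. -/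
theorem dS_truncate (F : Type*) [Field F] (a b n₁ n₂ : ℕ)
    (A₁ : Matrix (Fin a) (Fin n₁) F) (A₂ : Matrix (Fin a) (Fin n₂) F)
    (B₁ : Matrix (Fin b) (Fin n₁) F) (B₂ : Matrix (Fin b) (Fin n₂) F) :
    dS (rowSpace A₁) (rowSpace B₁)
      ≤ dS (rowSpace (Matrix.fromCols A₁ A₂)) (rowSpace (Matrix.fromCols B₁ B₂)) ∧
    dS (rowSpace A₂) (rowSpace B₂)
      ≤ dS (rowSpace (Matrix.fromCols A₁ A₂)) (rowSpace (Matrix.fromCols B₁ B₂)) := by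
  constructor
  · have hA := rowSpace_map_funLeft (F := F) (Sum.inl : Fin n₁ → Fin n₁ ⊕ Fin n₂)
      (Matrix.fromCols A₁ A₂)
    have hB := rowSpace_map_funLeft (F := F) (Sum.inl : Fin n₁ → Fin n₁ ⊕ Fin n₂)
      (Matrix.fromCols B₁ B₂)
    have e1 : (fun i => Matrix.fromCols A₁ A₂ i ∘ Sum.inl) = A₁ := by
      ext i j; simp [Matrix.fromCols]
    have e2 : (fun i => Matrix.fromCols B₁ B₂ i ∘ Sum.inl) = B₁ := by
      ext i j; simp [Matrix.fromCols]
    rw [e1] at hA; rw [e2] at hB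
    rw [← hA, ← hB]
    exact dS_map_le _ _ _
  · have hA := rowSpace_map_funLeft (F := F) (Sum.inr : Fin n₂ → Fin n₁ ⊕ Fin n₂)
      (Matrix.fromCols A₁ A₂)
    have hB := rowSpace_map_funLeft (F := F) (Sum.inr : Fin n₂ → Fin n₁ ⊕ Fin n₂)
      (Matrix.fromCols B₁ B₂)
    have e1 : (fun i => Matrix.fromCols A₁ A₂ i ∘ Sum.inr) = A₂ := by
      ext i j; simp [Matrix.fromCols]
    have e2 : (fun i => Matrix.fromCols B₁ B₂ i ∘ Sum.inr) = B₂ := by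
      ext i j; simp [Matrix.fromCols]
    rw [e1] at hA; rw [e2] at hB
    rw [← hA, ← hB]
    exact dS_map_le _ _ _
end

section
/- Truncating generator matrices cannot increase the injection distance: let A = (A_1 | A_2) ∈ F^{a×n} and B = (B_1 | B_2) ∈ F^{b×n}, where A_1 ∈ F^{a×n_1} and B_1 ∈ F^{b×n_1} for some 0 ≤ n_1 ≤ n. Then d_I(R(A_1), R(B_1)) ≤ d_I(R(A), R(B)) and d_I(R(A_2), R(B_2)) ≤ d_I(R(A), R(B)). -/
open Module LinearMap

/-- Rank–nullity for the restriction of `f` to a submodule `S`. -/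
lemma finrank_map_add_inf_ker {F W W' : Type*} [Field F] [AddCommGroup W] [Module F W]
    [FiniteDimensional F W] [AddCommGroup W'] [Module F W'] (f : W →ₗ[F] W')
    (S : Submodule F W) :
    finrank F ↥(S.map f) + finrank F ↥(LinearMap.ker f ⊓ S) = finrank F ↥S := by
  have h := LinearMap.finrank_range_add_finrank_ker (f.domRestrict S)
  rw [LinearMap.range_domRestrict, LinearMap.ker_domRestrict] at h
  rw [← h]
  congr 1
  have e1 : Submodule.comap S.subtype (LinearMap.ker f)
      = Submodule.comap S.subtype (LinearMap.ker f ⊓ S) := by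
    rw [Submodule.comap_inf]
    simp [Submodule.comap_subtype_self]
  rw [e1]
  exact (Submodule.comapSubtypeEquivOfLe inf_le_right).finrank_eq.symm

/-- The injection distance cannot increase under linear images. -/
lemma dI_map_le {F W W' : Type*} [Field F] [AddCommGroup W] [Module F W]
    [FiniteDimensional F W] [AddCommGroup W'] [Module F W'] (f : W →ₗ[F] W')
    (U V : Submodule F W) :
    dI (U.map f) (V.map f) ≤ dI U V := by
  unfold dI
  have h1 := finrank_map_add_inf_ker f (U ⊔ V)
  have h2 := finrank_map_add_inf_ker f U
  have h3 := finrank_map_add_inf_ker f V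
  rw [Submodule.map_sup] at h1
  have hkU : finrank F ↥(LinearMap.ker f ⊓ U) ≤ finrank F ↥(LinearMap.ker f ⊓ (U ⊔ V)) :=
    Submodule.finrank_mono (inf_le_inf_left _ le_sup_left)
  have hkV : finrank F ↥(LinearMap.ker f ⊓ V) ≤ finrank F ↥(LinearMap.ker f ⊓ (U ⊔ V)) :=
    Submodule.finrank_mono (inf_le_inf_left _ le_sup_right)
  have hU : finrank F ↥U ≤ finrank F ↥(U ⊔ V) := Submodule.finrank_mono le_sup_left
  have hV : finrank F ↥V ≤ finrank F ↥(U ⊔ V) := Submodule.finrank_mono le_sup_right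
  omega

lemma map_rowSpace_left {F : Type*} [Field F] {a n₁ n₂ : ℕ}
    (A₁ : Matrix (Fin a) (Fin n₁) F) (A₂ : Matrix (Fin a) (Fin n₂) F) :
    (rowSpace (Matrix.fromCols A₁ A₂)).map
        (LinearMap.funLeft F F (Sum.inl : Fin n₁ → Fin n₁ ⊕ Fin n₂)) = rowSpace A₁ := by
  unfold rowSpace
  rw [Submodule.map_span]
  erw [← Set.range_comp]
  congr 1

lemma map_rowSpace_right {F : Type*} [Field F] {a n₁ n₂ : ℕ}
    (A₁ : Matrix (Fin a) (Fin n₁) F) (A₂ : Matrix (Fin a) (Fin n₂) F) :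
    (rowSpace (Matrix.fromCols A₁ A₂)).map
        (LinearMap.funLeft F F (Sum.inr : Fin n₂ → Fin n₁ ⊕ Fin n₂)) = rowSpace A₂ := by
  unfold rowSpace
  rw [Submodule.map_span]
  erw [← Set.range_comp]
  congr 1

/-- Truncating generator matrices cannot increase the injection distance. -/
theorem dI_truncate (F : Type*) [Field F] (a b n₁ n₂ : ℕ)
    (A₁ : Matrix (Fin a) (Fin n₁) F) (A₂ : Matrix (Fin a) (Fin n₂) F)
    (B₁ : Matrix (Fin b) (Fin n₁) F) (B₂ : Matrix (Fin b) (Fin n₂) F) :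
    dI (rowSpace A₁) (rowSpace B₁)
      ≤ dI (rowSpace (Matrix.fromCols A₁ A₂)) (rowSpace (Matrix.fromCols B₁ B₂)) ∧
    dI (rowSpace A₂) (rowSpace B₂)
      ≤ dI (rowSpace (Matrix.fromCols A₁ A₂)) (rowSpace (Matrix.fromCols B₁ B₂)) := by
  constructor
  · rw [← map_rowSpace_left A₁ A₂, ← map_rowSpace_left B₁ B₂]
    exact dI_map_le _ _ _
  · rw [← map_rowSpace_right A₁ A₂, ← map_rowSpace_right B₁ B₂]
    exact dI_map_le _ _ _
end

section
/- The lifting map is an isometry: for all matrices C, D ∈ GF(q)^{r×(n-r)}, the injection distance between the liftings satisfies d_I(I(C), I(D)) = rk(C - D). -/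
/-- The lifting of `C ∈ F^{r×m}`: the row space of `(I_r | C)`. -/
noncomputable def lift {F : Type*} [Field F] {r m : ℕ} (C : Matrix (Fin r) (Fin m) F) :
    Submodule F (Fin r ⊕ Fin m → F) :=
  rowSpace (Matrix.fromCols (1 : Matrix (Fin r) (Fin r) F) C)

section Aux

variable {F : Type*} [Field F] {r m : ℕ}

/-- Evaluation at `Sum.inl j` of a linear combination of rows of `(A | B)` gives the
linear combination of rows of `A`. -/
lemma aux_eval_inl (A : Matrix (Fin r) (Fin r) F) (B : Matrix (Fin r) (Fin m) F)
    (c : Fin r → F) (j : Fin r) :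
    (∑ i, c i • Matrix.fromCols A B i) (Sum.inl j) = ∑ i, c i * A i j := by
  simp [Finset.sum_apply]

/-- The rows of `(I | M)` are linearly independent. -/
lemma aux_li (M : Matrix (Fin r) (Fin m) F) :
    LinearIndependent F (Matrix.fromCols (1 : Matrix (Fin r) (Fin r) F) M) := by
  erw [Fintype.linearIndependent_iff]
  intro c hc j
  have := congrFun hc (Sum.inl j)
  rw [aux_eval_inl] at this
  simpa [Matrix.one_apply] using this

/-- `dim (lift M) = r`. -/
lemma aux_finrank_lift (M : Matrix (Fin r) (Fin m) F) :
    Module.finrank F (lift M) = r := by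
  rw [lift, rowSpace, finrank_span_eq_card (aux_li M), Fintype.card_fin]

/-- The embedding `w ↦ (0, w)` as a linear map. -/
noncomputable def elimZero : (Fin m → F) →ₗ[F] (Fin r ⊕ Fin m → F) where
  toFun w := Sum.elim 0 w
  map_add' a b := by funext x; cases x <;> simp
  map_smul' c a := by funext x; cases x <;> simp

lemma elimZero_injective : Function.Injective (elimZero (F := F) (r := r) (m := m)) := by
  intro a b h
  funext x
  exact congrFun h (Sum.inr x)

lemma aux_rowSpace_zero (M : Matrix (Fin r) (Fin m) F) :
    rowSpace (Matrix.fromCols (0 : Matrix (Fin r) (Fin r) F) M) =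
      Submodule.map elimZero (rowSpace M) := by
  rw [rowSpace, rowSpace, Submodule.map_span]
  erw [← Set.range_comp]
  have h : (⇑(elimZero (F := F) (r := r) (m := m)) ∘ M) = Matrix.fromCols 0 M := by
    funext i x
    cases x <;> rfl
  rw [h]

lemma aux_finrank_rowSpace_zero (M : Matrix (Fin r) (Fin m) F) :
    Module.finrank F (rowSpace (Matrix.fromCols (0 : Matrix (Fin r) (Fin r) F) M)) =
      Module.finrank F (rowSpace M) := by
  rw [aux_rowSpace_zero]
  exact (Submodule.equivMapOfInjective _ elimZero_injective (rowSpace M)).finrank_eq.symm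

/-- Elements of the row space of `(0 | M)` vanish on the left block. -/
lemma aux_vanish (M : Matrix (Fin r) (Fin m) F) {v : Fin r ⊕ Fin m → F}
    (hv : v ∈ rowSpace (Matrix.fromCols (0 : Matrix (Fin r) (Fin r) F) M)) (j : Fin r) :
    v (Sum.inl j) = 0 := by
  rw [rowSpace] at hv
  erw [Submodule.mem_span_range_iff_exists_fun] at hv
  obtain ⟨c, rfl⟩ := hv
  rw [aux_eval_inl]
  simp

end Aux

/-- The lifting map is an isometry: `d_I(I(C), I(D)) = rk(C - D)`. -/
theorem dI_lift_eq_rank_sub (F : Type*) [Field F] (r m : ℕ)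
    (C D : Matrix (Fin r) (Fin m) F) :
    dI (lift C) (lift D) = rk (C - D) := by
  classical
  set E : Submodule F (Fin r ⊕ Fin m → F) :=
    rowSpace (Matrix.fromCols (0 : Matrix (Fin r) (Fin r) F) (C - D)) with hE
  -- row relation: row_i (I|C) = row_i (I|D) + row_i (0|C-D)
  have hrow : ∀ i, Matrix.fromCols (1 : Matrix (Fin r) (Fin r) F) C i =
      Matrix.fromCols (1 : Matrix (Fin r) (Fin r) F) D i +
      Matrix.fromCols (0 : Matrix (Fin r) (Fin r) F) (C - D) i := by
    intro i
    funext x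
    cases x <;> simp [Matrix.sub_apply]
  have hkey : lift C ⊔ lift D = lift D ⊔ E := by
    apply le_antisymm
    · apply sup_le
      · rw [lift, rowSpace, Submodule.span_le]
        rintro _ ⟨i, rfl⟩
        rw [hrow i]
        exact add_mem
          (Submodule.mem_sup_left (Submodule.subset_span ⟨i, rfl⟩))
          (Submodule.mem_sup_right (Submodule.subset_span ⟨i, rfl⟩))
      · exact le_sup_left
    · apply sup_le
      · exact le_sup_right
      · rw [hE, rowSpace, Submodule.span_le]
        rintro _ ⟨i, rfl⟩
        have : Matrix.fromCols (0 : Matrix (Fin r) (Fin r) F) (C - D) i =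
            Matrix.fromCols (1 : Matrix (Fin r) (Fin r) F) C i -
            Matrix.fromCols (1 : Matrix (Fin r) (Fin r) F) D i := by
          rw [hrow i]; ring
        rw [this]
        exact sub_mem
          (Submodule.mem_sup_left (Submodule.subset_span ⟨i, rfl⟩))
          (Submodule.mem_sup_right (Submodule.subset_span ⟨i, rfl⟩))
  have hdisj : lift D ⊓ E = ⊥ := by
    rw [Submodule.eq_bot_iff]
    intro v hv
    rw [Submodule.mem_inf] at hv
    obtain ⟨hvD, hvE⟩ := hv
    rw [lift, rowSpace] at hvD
    erw [Submodule.mem_span_range_iff_exists_fun] at hvD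
    obtain ⟨c, rfl⟩ := hvD
    have hc : ∀ j, c j = 0 := by
      intro j
      have := aux_vanish (C - D) hvE j
      rw [aux_eval_inl] at this
      simpa [Matrix.one_apply] using this
    have : c = 0 := funext hc
    subst this
    simp
  have hsum : Module.finrank F ↥(lift D ⊔ E) =
      Module.finrank F ↥(lift D) + Module.finrank F ↥E := by
    have := Submodule.finrank_sup_add_finrank_inf_eq (lift D) E
    rw [hdisj] at this
    simpa using this
  rw [dI, hkey, hsum, aux_finrank_lift C, aux_finrank_lift D, min_self,
    hE, aux_finrank_rowSpace_zero, rk]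
  omega
end

section
/- Any lifting of a rank metric code has maximum covering radius: if 𝒞 ⊆ F^{r×(n-r)} is a nonempty set of matrices with r ≤ n-r, and D is the r-dimensional subspace of F^n generated by (0 | D_1) where D_1 ∈ F^{r×(n-r)} has rank r, then for every C ∈ 𝒞, d_I(D, I(C)) = r. -/
/-- Liftings of rank metric codes have maximum covering radius: the subspace generated by
`(0 | D₁)` with `rk D₁ = r` is at injection distance `r` from every lifted codeword. -/
theorem lifting_max_covering_radius (F : Type*) [Field F] (r m : ℕ) (hrm : r ≤ m)
    (𝒞 : Set (Matrix (Fin r) (Fin m) F)) (hne : 𝒞.Nonempty)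
    (D₁ : Matrix (Fin r) (Fin m) F) (hD₁ : rk D₁ = r) :
    ∀ C ∈ 𝒞,
      dI (rowSpace (Matrix.fromCols (0 : Matrix (Fin r) (Fin r) F) D₁))
         (rowSpace (Matrix.fromCols (1 : Matrix (Fin r) (Fin r) F) C)) = r := by
  intro C _
  classical
  set A := Matrix.fromCols (0 : Matrix (Fin r) (Fin r) F) D₁ with hA
  set B := Matrix.fromCols (1 : Matrix (Fin r) (Fin r) F) C with hB
  set L : ((Fin r ⊕ Fin m) → F) →ₗ[F] (Fin r → F) := LinearMap.funLeft F F Sum.inl with hL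
  set R : ((Fin r ⊕ Fin m) → F) →ₗ[F] (Fin m → F) := LinearMap.funLeft F F Sum.inr with hR
  have hD1li : LinearIndependent F D₁ := by
    rw [show D₁ = fun i => D₁ i from rfl, linearIndependent_iff_card_eq_finrank_span]
    rw [Fintype.card_fin]; exact hD₁.symm
  have hAli : LinearIndependent F A := by
    apply LinearIndependent.of_comp R
    have : (⇑R ∘ A) = D₁ := by
      funext i; ext j; simp [hA, hR, LinearMap.funLeft, Function.comp_apply, Matrix.fromCols_apply_inr]; rfl
    rw [this]; exact hD1li
  have hBli : LinearIndependent F B := by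
    apply LinearIndependent.of_comp L
    have : (⇑L ∘ B) = fun i => Pi.single i (1:F) := by
      funext i; ext j
      simp [hB, hL, LinearMap.funLeft, Matrix.one_apply, Pi.single_apply, eq_comm, Function.comp_apply, Matrix.fromCols_apply_inl]; rfl
    rw [this]
    have heq : (fun i => Pi.single i (1:F)) = ⇑(Pi.basisFun F (Fin r)) := by
      funext i; simp
    rw [heq]
    exact (Pi.basisFun F (Fin r)).linearIndependent
  have hdimA : Module.finrank F (rowSpace A) = r := by
    rw [rowSpace, finrank_span_eq_card hAli, Fintype.card_fin]
  have hdimB : Module.finrank F (rowSpace B) = r := by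
    rw [rowSpace, finrank_span_eq_card hBli, Fintype.card_fin]
  have hinf : rowSpace A ⊓ rowSpace B = ⊥ := by
    rw [eq_bot_iff]
    rintro v ⟨hvA, hvB⟩
    have hLv : L v = 0 := by
      have hker : rowSpace A ≤ LinearMap.ker L := by
        rw [rowSpace, Submodule.span_le]
        rintro _ ⟨i, rfl⟩
        simp only [SetLike.mem_coe, LinearMap.mem_ker]
        ext j
        simp [hA, hL, LinearMap.funLeft]
      exact hker hvA
    obtain ⟨c, rfl⟩ := Submodule.mem_span_range_iff_exists_fun F |>.mp hvB
    have hc : c = 0 := by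
      funext j
      have := congrFun hLv j
      simpa [hL, hB, LinearMap.funLeft, Finset.sum_apply, Matrix.one_apply,
        mul_ite] using this
    simp [hc]
  haveI : FiniteDimensional F (rowSpace A) := by
    rw [rowSpace]; exact FiniteDimensional.span_of_finite F (Set.finite_range _)
  haveI : FiniteDimensional F (rowSpace B) := by
    rw [rowSpace]; exact FiniteDimensional.span_of_finite F (Set.finite_range _)
  have hsup : Module.finrank F ↥(rowSpace A ⊔ rowSpace B) = r + r := by
    have := Submodule.finrank_sup_add_finrank_inf_eq (rowSpace A) (rowSpace B)
    rw [hinf, hdimA, hdimB] at this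
    simpa using this
  rw [dI, hsup, hdimA, hdimB, min_self]
  omega
end

section
/- Sphere-covering bound for constant-dimension codes: if 𝒞 is a set of r-dimensional subspaces of GF(q)^n such that every r-dimensional subspace is within injection distance ρ of some element of 𝒞, then |𝒞| ≥ [n choose r]_q / V_C(ρ), where V_C(ρ) = ∑_{d=0}^{ρ} q^{d²}·[r choose d]_q·[n-r choose d]_q. -/
open Module Finset Function

/-- Volume of a ball of injection-radius `t` in the Grassmannian `E_r(q,n)`:
`V_C(t) = ∑_{d=0}^{t} q^{d²} [r choose d]_q [n-r choose d]_q`. -/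
noncomputable def ballVol (q n r t : ℕ) : ℝ :=
  ∑ d ∈ Finset.range (t + 1),
    (q : ℝ) ^ (d ^ 2) * gaussBinom q r d * gaussBinom q (n - r) d

/-! ### Counting lemmas -/

section CardLemmas

lemma SCB.nat_card_sigma {ι : Type*} [Fintype ι] (f : ι → Type*) [∀ i, Finite (f i)] :
    Nat.card (Σ i, f i) = ∑ i, Nat.card (f i) := by
  haveI := fun i => Fintype.ofFinite (f i)
  simp [Nat.card_eq_fintype_card, Fintype.card_sigma]

variable {K W W' : Type*} [DivisionRing K] [AddCommGroup W] [Module K W]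
  [AddCommGroup W'] [Module K W']

noncomputable def SCB.fiberEquivKer (f : W →ₗ[K] W') (v : W') (w0 : W) (h0 : f w0 = v) :
    {w : W // f w = v} ≃ LinearMap.ker f where
  toFun w := ⟨w.1 - w0, by simp [LinearMap.mem_ker, w.2, h0]⟩
  invFun k := ⟨k.1 + w0, by have := k.2; simp [LinearMap.mem_ker] at this; simp [this, h0]⟩
  left_inv w := by ext; simp
  right_inv k := by ext; simp

lemma SCB.card_li_comp [Finite W] (f : W →ₗ[K] W') (hf : Surjective f) (d : ℕ) :
    Nat.card {y : Fin d → W // LinearIndependent K (f ∘ y)} =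
      Nat.card (LinearMap.ker f) ^ d * Nat.card {s : Fin d → W' // LinearIndependent K s} := by
  have hW' : Finite W' := Finite.of_surjective f hf
  have e : {y : Fin d → W // LinearIndependent K (f ∘ y)} ≃
      Σ s : {s : Fin d → W' // LinearIndependent K s}, {y : Fin d → W // f ∘ y = s.1} :=
    { toFun := fun y => ⟨⟨f ∘ y.1, y.2⟩, ⟨y.1, rfl⟩⟩
      invFun := fun p => ⟨p.2.1, by rw [p.2.2]; exact p.1.2⟩
      left_inv := fun y => rfl
      right_inv := fun p => by
        obtain ⟨⟨s, hs⟩, ⟨y, hy⟩⟩ := p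
        simp only [Sigma.mk.inj_iff]
        constructor
        · exact Subtype.ext hy
        · apply HEq.symm; rw [Subtype.heq_iff_coe_eq] <;> simp [hy]
    }
  rw [Nat.card_congr e]
  have key : ∀ s : {s : Fin d → W' // LinearIndependent K s},
      Nat.card {y : Fin d → W // f ∘ y = s.1} = Nat.card (LinearMap.ker f) ^ d := by
    intro s
    have e2 : {y : Fin d → W // f ∘ y = s.1} ≃ ∀ i : Fin d, {w : W // f w = s.1 i} :=
      { toFun := fun y i => ⟨y.1 i, congrFun y.2 i⟩
        invFun := fun g => ⟨fun i => (g i).1, funext fun i => (g i).2⟩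
        left_inv := fun y => rfl
        right_inv := fun g => rfl }
    rw [Nat.card_congr e2, Nat.card_pi]
    have : ∀ i, Nat.card {w : W // f w = s.1 i} = Nat.card (LinearMap.ker f) := by
      intro i
      obtain ⟨w0, h0⟩ := hf (s.1 i)
      exact Nat.card_congr (SCB.fiberEquivKer f (s.1 i) w0 h0)
    simp [this]
  classical
  haveI := Fintype.ofFinite {s : Fin d → W' // LinearIndependent K s}
  haveI : ∀ s : {s : Fin d → W' // LinearIndependent K s},
      Fintype {y : Fin d → W // f ∘ y = s.1} := fun s => Fintype.ofFinite _
  rw [Nat.card_eq_fintype_card, Fintype.card_sigma]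
  calc (∑ s : {s : Fin d → W' // LinearIndependent K s},
        Fintype.card {y : Fin d → W // f ∘ y = s.1})
      = ∑ s : {s : Fin d → W' // LinearIndependent K s}, Nat.card (LinearMap.ker f) ^ d := by
        refine Finset.sum_congr rfl fun s _ => ?_
        rw [← Nat.card_eq_fintype_card, key s]
    _ = Nat.card (LinearMap.ker f) ^ d * Nat.card {s : Fin d → W' // LinearIndependent K s} := by
        haveI := Fintype.ofFinite (LinearMap.ker f)
        simp [Finset.sum_const, mul_comm, Nat.card_eq_fintype_card]

end CardLemmas

section FieldLemmas

variable {K W : Type*} [Field K] [AddCommGroup W] [Module K W] [Fintype K] [Finite W]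

lemma SCB.card_grass (k : ℕ) (hk : k ≤ finrank K W) :
    Nat.card {X : Submodule K W // finrank K X = k} *
      ∏ i ∈ range k, (Fintype.card K ^ k - Fintype.card K ^ i) =
      ∏ i ∈ range k, (Fintype.card K ^ finrank K W - Fintype.card K ^ i) := by
  classical
  haveI : Module.Finite K W := Module.Finite.of_finite
  have hspan : ∀ (X : Submodule K W) (hX : finrank K ↥X = k)
      (t : Fin k → ↥X), LinearIndependent K t →
      Submodule.span K (Set.range (X.subtype ∘ t)) = X := by
    intro X hX t ht
    apply Submodule.eq_of_le_of_finrank_le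
    · rw [Submodule.span_le, Set.range_comp]
      rintro x ⟨y, ⟨i, rfl⟩, rfl⟩
      exact (t i).2
    · rw [finrank_span_eq_card (ht.map' _ (Submodule.ker_subtype _)), Fintype.card_fin, hX]
  set Φ : (Σ X : {X : Submodule K W // finrank K X = k},
      {t : Fin k → ↥X.1 // LinearIndependent K t}) → {t : Fin k → W // LinearIndependent K t} :=
    fun p => ⟨p.1.1.subtype ∘ p.2.1, p.2.2.map' _ (Submodule.ker_subtype _)⟩ with hΦ
  have hΦbij : Function.Bijective Φ := by
    constructor
    · rintro ⟨⟨X, hX⟩, ⟨t, ht⟩⟩ ⟨⟨X', hX'⟩, ⟨t', ht'⟩⟩ h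
      have h' : X.subtype ∘ t = X'.subtype ∘ t' := congrArg Subtype.val h
      have hXX' : X = X' := by
        rw [← hspan X hX t ht, ← hspan X' hX' t' ht', h']
      subst hXX'
      have ht2 : t = t' := by
        funext i
        exact Subtype.ext (congrFun h' i)
      subst ht2
      rfl
    · rintro ⟨t, ht⟩
      have hli : LinearIndependent K (fun i => (⟨t i, Submodule.subset_span
          (Set.mem_range_self i)⟩ : Submodule.span K (Set.range t))) := by
        have : t = (Submodule.span K (Set.range t)).subtype ∘
            (fun i => (⟨t i, Submodule.subset_span (Set.mem_range_self i)⟩ :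
              Submodule.span K (Set.range t))) := rfl
        rw [this] at ht
        exact LinearIndependent.of_comp _ ht
      exact ⟨⟨⟨Submodule.span K (Set.range t), by
          rw [finrank_span_eq_card ht, Fintype.card_fin]⟩,
        fun i => ⟨t i, Submodule.subset_span (Set.mem_range_self i)⟩, hli⟩, Subtype.ext rfl⟩
  have hcardW := card_linearIndependent (K := K) (V := W) hk
  rw [← Fin.prod_univ_eq_prod_range (fun j => Fintype.card K ^ finrank K W - Fintype.card K ^ j) k,
    ← hcardW, ← Nat.card_congr (Equiv.ofBijective Φ hΦbij)]
  have hinner : ∀ X : {X : Submodule K W // finrank K X = k},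
      Nat.card {t : Fin k → ↥X.1 // LinearIndependent K t} =
        ∏ i ∈ range k, (Fintype.card K ^ k - Fintype.card K ^ i) := by
    intro X
    have h2 := card_linearIndependent (K := K) (V := ↥X.1) (k := k) (le_of_eq X.2.symm)
    rw [h2, X.2, ← Fin.prod_univ_eq_prod_range (fun j => Fintype.card K ^ k - Fintype.card K ^ j) k]
  haveI := Fintype.ofFinite {X : Submodule K W // finrank K X = k}
  haveI : ∀ X : {X : Submodule K W // finrank K X = k},
      Fintype {t : Fin k → ↥X.1 // LinearIndependent K t} := fun X => Fintype.ofFinite _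
  have hsig : Nat.card (Σ X : {X : Submodule K W // finrank K X = k},
      {t : Fin k → ↥X.1 // LinearIndependent K t}) =
      ∑ X : {X : Submodule K W // finrank K X = k},
        Nat.card {t : Fin k → ↥X.1 // LinearIndependent K t} := by
    simp [Nat.card_eq_fintype_card, Fintype.card_sigma]
  rw [hsig, Finset.sum_congr rfl (fun X _ => hinner X), Finset.sum_const, smul_eq_mul,
    Finset.card_univ]
  simp [Nat.card_eq_fintype_card]

lemma SCB.card_Y (C : Submodule K W) (d : ℕ) (hd : d ≤ finrank K (W ⧸ C)) :
    Nat.card {y : Fin d → W // LinearIndependent K (C.mkQ ∘ y)} =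
      Fintype.card K ^ (finrank K C * d) *
        ∏ i ∈ Finset.range d,
          (Fintype.card K ^ finrank K (W ⧸ C) - Fintype.card K ^ i) := by
  haveI : Finite (W ⧸ C) := Finite.of_surjective _ (Submodule.mkQ_surjective C)
  rw [SCB.card_li_comp C.mkQ (Submodule.mkQ_surjective C) d]
  congr 1
  · rw [Submodule.ker_mkQ]
    haveI := Fintype.ofFinite ↥C
    rw [Nat.card_eq_fintype_card, card_eq_pow_finrank (K := K), ← pow_mul]
  · rw [card_linearIndependent (K := K) hd,
      ← Fin.prod_univ_eq_prod_range
        (fun j => Fintype.card K ^ finrank K (W ⧸ C) - Fintype.card K ^ j) d]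

lemma SCB.card_Sd_mul_le (C : Submodule K W) (r d : ℕ) (hd : d ≤ r) :
    Nat.card {U : Submodule K W // finrank K U = r ∧ finrank K ↥(U ⊓ C) = r - d} *
      (Fintype.card K ^ ((r - d) * d) *
        ∏ i ∈ range d, (Fintype.card K ^ d - Fintype.card K ^ i)) ≤
    Nat.card {X : Submodule K ↥C // finrank K X = r - d} *
      Nat.card {y : Fin d → W // LinearIndependent K (C.mkQ ∘ y)} := by
  classical
  haveI : Module.Finite K W := Module.Finite.of_finite
  haveI : Finite (Submodule K W) :=
    Finite.of_injective (fun s => (s : Set W)) SetLike.coe_injective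
  haveI : Finite (Submodule K ↥C) :=
    Finite.of_injective (fun s => (s : Set ↥C)) SetLike.coe_injective
  have hrec : ∀ (U : Submodule K W), finrank K U = r → finrank K ↥(U ⊓ C) = r - d →
      ∀ y : Fin d → W, (∀ i, y i ∈ U) → LinearIndependent K (C.mkQ ∘ y) →
      (U ⊓ C) ⊔ Submodule.span K (Set.range y) = U := by
    intro U hU hUC y hyU hyLI
    have hyli : LinearIndependent K y := LinearIndependent.of_comp _ hyLI
    have hle : (U ⊓ C) ⊔ Submodule.span K (Set.range y) ≤ U := by
      refine sup_le inf_le_left ?_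
      rw [Submodule.span_le]
      rintro x ⟨i, rfl⟩
      exact hyU i
    have hbot : (U ⊓ C) ⊓ Submodule.span K (Set.range y) = ⊥ := by
      rw [eq_bot_iff]
      rintro x ⟨⟨hxU, hxC⟩, hxs⟩
      rw [SetLike.mem_coe, Submodule.mem_span_range_iff_exists_fun] at hxs
      obtain ⟨c, hc⟩ := hxs
      have h0 : ∑ i, c i • (C.mkQ ∘ y) i = 0 := by
        have hx0 : C.mkQ x = 0 := (Submodule.Quotient.mk_eq_zero C).mpr hxC
        rw [← hx0, ← hc, map_sum]
        simp
      have hc0 := Fintype.linearIndependent_iff.mp hyLI c h0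
      have : x = 0 := by rw [← hc]; simp [hc0]
      simp [this]
    apply Submodule.eq_of_le_of_finrank_le hle
    · have hrank := Submodule.finrank_sup_add_finrank_inf_eq (U ⊓ C)
        (Submodule.span K (Set.range y))
      rw [hbot, finrank_bot, hUC, finrank_span_eq_card hyli, Fintype.card_fin] at hrank
      omega
  have hNice : ∀ (U : Submodule K W), finrank K U = r → finrank K ↥(U ⊓ C) = r - d →
      Nat.card {y : Fin d → W // (∀ i, y i ∈ U) ∧ LinearIndependent K (C.mkQ ∘ y)} =
      Fintype.card K ^ ((r - d) * d) *
        ∏ i ∈ range d, (Fintype.card K ^ d - Fintype.card K ^ i) := by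
    intro U hU hUC
    set g : ↥U →ₗ[K] W ⧸ C := C.mkQ ∘ₗ U.subtype with hg
    have e1 : {y : Fin d → W // (∀ i, y i ∈ U) ∧ LinearIndependent K (C.mkQ ∘ y)} ≃
        {z : Fin d → ↥U // LinearIndependent K (g ∘ z)} :=
      { toFun := fun y => ⟨fun i => ⟨y.1 i, y.2.1 i⟩, y.2.2⟩
        invFun := fun z => ⟨fun i => (z.1 i : W), fun i => (z.1 i).2, z.2⟩
        left_inv := fun y => rfl
        right_inv := fun z => rfl }
    have e2 : {z : Fin d → ↥U // LinearIndependent K (g ∘ z)} ≃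
        {z : Fin d → ↥U // LinearIndependent K (g.rangeRestrict ∘ z)} :=
      Equiv.subtypeEquivRight (fun z => by
        constructor
        · intro h
          exact LinearIndependent.of_comp (LinearMap.range g).subtype h
        · intro h
          exact h.map' (LinearMap.range g).subtype (Submodule.ker_subtype _))
    rw [Nat.card_congr (e1.trans e2),
      SCB.card_li_comp g.rangeRestrict (LinearMap.surjective_rangeRestrict g) d]
    have hkerg : finrank K (LinearMap.ker g) = r - d := by
      have hkg : LinearMap.ker g = Submodule.comap U.subtype (U ⊓ C) := by
        ext x
        simp only [hg, LinearMap.mem_ker, LinearMap.coe_comp, Function.comp_apply,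
          Submodule.coe_subtype, Submodule.mem_comap, Submodule.mem_inf]
        rw [← Submodule.Quotient.mk_eq_zero C, Submodule.mkQ_apply]
        exact ⟨fun h => ⟨x.2, h⟩, fun h => h.2⟩
      rw [hkg, LinearEquiv.finrank_eq (Submodule.comapSubtypeEquivOfLe inf_le_left), hUC]
    have hrange : finrank K (LinearMap.range g) = d := by
      have h5 := LinearMap.finrank_range_add_finrank_ker g
      rw [hkerg, hU] at h5
      omega
    haveI : Finite (W ⧸ C) := Finite.of_surjective _ (Submodule.mkQ_surjective C)
    congr 1
    · rw [LinearMap.ker_rangeRestrict]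
      haveI := Fintype.ofFinite (LinearMap.ker g)
      rw [Nat.card_eq_fintype_card, card_eq_pow_finrank (K := K), hkerg, ← pow_mul]
    · rw [card_linearIndependent (K := K) (V := ↥(LinearMap.range g))
        (le_of_eq hrange.symm), hrange,
        ← Fin.prod_univ_eq_prod_range (fun j => Fintype.card K ^ d - Fintype.card K ^ j) d]
  set S := {U : Submodule K W // finrank K U = r ∧ finrank K ↥(U ⊓ C) = r - d} with hS
  have hfr : ∀ U : S, finrank K (Submodule.comap C.subtype (U.1 ⊓ C)) = r - d := by
    intro U
    rw [LinearEquiv.finrank_eq (Submodule.comapSubtypeEquivOfLe inf_le_right)]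
    exact U.2.2
  set Φ : (Σ U : S, {y : Fin d → W // (∀ i, y i ∈ U.1) ∧ LinearIndependent K (C.mkQ ∘ y)}) →
      ({X : Submodule K ↥C // finrank K X = r - d} ×
        {y : Fin d → W // LinearIndependent K (C.mkQ ∘ y)}) :=
    fun p => (⟨Submodule.comap C.subtype (p.1.1 ⊓ C), hfr p.1⟩, ⟨p.2.1, p.2.2.2⟩) with hΦ
  have hinj : Function.Injective Φ := by
    rintro ⟨⟨U, hU⟩, ⟨y, hy⟩⟩ ⟨⟨U', hU'⟩, ⟨y', hy'⟩⟩ h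
    simp only [hΦ, Prod.mk.injEq, Subtype.mk.injEq] at h
    obtain ⟨h1, h2⟩ := h
    have hUC : U ⊓ C = U' ⊓ C := by
      have := congrArg (Submodule.map C.subtype) h1
      rwa [Submodule.map_comap_subtype, Submodule.map_comap_subtype,
        inf_eq_right.mpr (inf_le_right : U ⊓ C ≤ C),
        inf_eq_right.mpr (inf_le_right : U' ⊓ C ≤ C)] at this
    have hUU' : U = U' := by
      rw [← hrec U hU.1 hU.2 y hy.1 hy.2, ← hrec U' hU'.1 hU'.2 y' hy'.1 hy'.2, hUC, h2]
    subst hUU'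
    obtain rfl : y = y' := h2
    rfl
  haveI := Fintype.ofFinite S
  haveI : ∀ U : S, Fintype {y : Fin d → W // (∀ i, y i ∈ U.1) ∧
      LinearIndependent K (C.mkQ ∘ y)} := fun U => Fintype.ofFinite _
  have hsig : Nat.card (Σ U : S, {y : Fin d → W // (∀ i, y i ∈ U.1) ∧
      LinearIndependent K (C.mkQ ∘ y)}) =
      Nat.card S * (Fintype.card K ^ ((r - d) * d) *
        ∏ i ∈ range d, (Fintype.card K ^ d - Fintype.card K ^ i)) := by
    rw [Nat.card_eq_fintype_card, Fintype.card_sigma,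
      Finset.sum_congr rfl (fun U _ => by rw [← Nat.card_eq_fintype_card, hNice U.1 U.2.1 U.2.2]),
      Finset.sum_const, smul_eq_mul, Finset.card_univ, Nat.card_eq_fintype_card]
  calc Nat.card S * (Fintype.card K ^ ((r - d) * d) *
        ∏ i ∈ range d, (Fintype.card K ^ d - Fintype.card K ^ i))
      = Nat.card (Σ U : S, {y : Fin d → W // (∀ i, y i ∈ U.1) ∧
          LinearIndependent K (C.mkQ ∘ y)}) := hsig.symm
    _ ≤ Nat.card ({X : Submodule K ↥C // finrank K X = r - d} ×
          {y : Fin d → W // LinearIndependent K (C.mkQ ∘ y)}) :=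
        Nat.card_le_card_of_injective Φ hinj
    _ = _ := Nat.card_prod _ _

end FieldLemmas

/-! ### Real-number algebra for Gaussian binomials -/

noncomputable def SCB.Pprod (q m k : ℕ) : ℝ := ∏ i ∈ Finset.range k, ((q : ℝ) ^ m - (q : ℝ) ^ i)

noncomputable def SCB.Qf (q m : ℕ) : ℝ := ∏ j ∈ Finset.range m, ((q : ℝ) ^ (j + 1) - 1)

namespace SCB

variable {q : ℕ}

lemma hq1 (hq : 2 ≤ q) : (1 : ℝ) < q := by exact_mod_cast hq
lemma hq0 (hq : 2 ≤ q) : (0 : ℝ) < q := lt_trans one_pos (hq1 hq)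

lemma pow_lt_pow_q (hq : 2 ≤ q) {i m : ℕ} (h : i < m) : (q : ℝ) ^ i < (q : ℝ) ^ m :=
  pow_lt_pow_right₀ (hq1 hq) h

lemma Pprod_pos (hq : 2 ≤ q) {m k : ℕ} (hkm : k ≤ m) : 0 < Pprod q m k := by
  apply Finset.prod_pos
  intro i hi
  rw [Finset.mem_range] at hi
  exact sub_pos.mpr (pow_lt_pow_q hq (lt_of_lt_of_le hi hkm))

lemma Qf_pos (hq : 2 ≤ q) (m : ℕ) : 0 < Qf q m := by
  apply Finset.prod_pos
  intro j _
  have : (1 : ℝ) < (q : ℝ) ^ (j + 1) := one_lt_pow₀ (hq1 hq) (Nat.succ_ne_zero j)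
  linarith

lemma cast_nat_prod (hq : 2 ≤ q) {m k : ℕ} (hkm : k ≤ m) :
    ((∏ i ∈ Finset.range k, (q ^ m - q ^ i) : ℕ) : ℝ) = Pprod q m k := by
  rw [Nat.cast_prod, Pprod]
  refine Finset.prod_congr rfl fun i hi => ?_
  rw [Finset.mem_range] at hi
  rw [Nat.cast_sub (Nat.pow_le_pow_right (by omega) (show i ≤ m by omega))]
  push_cast
  ring

lemma gauss_eq_div {m k : ℕ} : gaussBinom q m k = Pprod q m k / Pprod q k k := by
  rw [gaussBinom, Pprod, Pprod, ← Finset.prod_div_distrib]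

lemma gauss_pos (hq : 2 ≤ q) {m k : ℕ} (hkm : k ≤ m) : 0 < gaussBinom q m k := by
  rw [gauss_eq_div]
  exact div_pos (Pprod_pos hq hkm) (Pprod_pos hq le_rfl)

lemma gauss_zero {m k : ℕ} (h : m < k) : gaussBinom q m k = 0 := by
  rw [gaussBinom]
  apply Finset.prod_eq_zero (Finset.mem_range.mpr h)
  simp

lemma gauss_nonneg (hq : 2 ≤ q) (m k : ℕ) : 0 ≤ gaussBinom q m k := by
  rcases le_or_gt k m with h | h
  · exact le_of_lt (gauss_pos hq h)
  · rw [gauss_zero h]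

lemma prod_tail_eq {m k : ℕ} (hkm : k ≤ m) :
    ∏ i ∈ Finset.range k, ((q : ℝ) ^ (m - i) - 1) =
      ∏ i ∈ Finset.range k, ((q : ℝ) ^ ((m - k) + i + 1) - 1) := by
  rw [← Finset.prod_range_reflect (fun i => ((q : ℝ) ^ ((m - k) + i + 1) - 1)) k]
  refine Finset.prod_congr rfl fun j hj => ?_
  rw [Finset.mem_range] at hj
  congr 2
  omega

lemma Qf_split {m k : ℕ} (hkm : k ≤ m) :
    Qf q m = Qf q (m - k) * ∏ i ∈ Finset.range k, ((q : ℝ) ^ (m - i) - 1) := by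
  rw [prod_tail_eq hkm, Qf, Qf]
  rw [show m = (m - k) + k by omega, Finset.prod_range_add]
  congr 1
  · rw [show (m - k) + k - k = m - k by omega]
  · refine Finset.prod_congr rfl fun i _ => ?_
    congr 2
    omega

lemma gauss_qf (hq : 2 ≤ q) {m k : ℕ} (hkm : k ≤ m) :
    gaussBinom q m k = Qf q m / (Qf q (m - k) * Qf q k) := by
  have hfac : ∀ j l : ℕ, j ≤ l →
      (q : ℝ) ^ l - (q : ℝ) ^ j = (q : ℝ) ^ j * ((q : ℝ) ^ (l - j) - 1) := by
    intro j l hjl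
    rw [mul_sub, mul_one, ← pow_add]
    congr 2
    omega
  have step : gaussBinom q m k =
      ∏ i ∈ Finset.range k, (((q : ℝ) ^ (m - i) - 1) / ((q : ℝ) ^ (k - i) - 1)) := by
    rw [gaussBinom]
    refine Finset.prod_congr rfl fun i hi => ?_
    rw [Finset.mem_range] at hi
    rw [hfac i m (by omega), hfac i k (by omega),
      mul_div_mul_left _ _ (pow_ne_zero i (ne_of_gt (hq0 hq)))]
  rw [step, Finset.prod_div_distrib]
  have hnum : ∏ i ∈ Finset.range k, ((q : ℝ) ^ (m - i) - 1) = Qf q m / Qf q (m - k) := by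
    rw [Qf_split hkm]
    field_simp [ne_of_gt (Qf_pos hq (m - k))]
  have hden : ∏ i ∈ Finset.range k, ((q : ℝ) ^ (k - i) - 1) = Qf q k := by
    have := Qf_split (q := q) (le_refl k)
    rw [Nat.sub_self] at this
    rw [show Qf q 0 = 1 by simp [Qf], one_mul] at this
    exact this.symm
  rw [hnum, hden, div_div]

lemma gauss_symm (hq : 2 ≤ q) {m k : ℕ} (hkm : k ≤ m) :
    gaussBinom q m (m - k) = gaussBinom q m k := by
  rw [gauss_qf hq (Nat.sub_le m k), gauss_qf hq hkm, show m - (m - k) = k by omega, mul_comm]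

end SCB

/-- Sphere-covering bound for constant-dimension codes. -/
theorem sphere_covering_bound (q n r ρ : ℕ) (F : Type*) [Field F] [Fintype F]
    (hq : Fintype.card F = q) (hr : r ≤ n)
    (𝒞 : Finset (Submodule F (Fin n → F)))
    (hdim : ∀ C ∈ 𝒞, Module.finrank F ↥C = r)
    (hcov : ∀ U : Submodule F (Fin n → F), Module.finrank F ↥U = r →
      ∃ C ∈ 𝒞, dI U C ≤ ρ) :
    gaussBinom q n r / ballVol q n r ρ ≤ (𝒞.card : ℝ) := by
  classical
  have hq2 : 2 ≤ q := by rw [← hq]; exact Fintype.one_lt_card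
  haveI : Finite (Submodule F (Fin n → F)) :=
    Finite.of_injective (fun s => (s : Set (Fin n → F))) SetLike.coe_injective
  have hfrV : finrank F (Fin n → F) = n := Module.finrank_fin_fun F
  -- Step 1 : the Grassmannian cardinality
  set N := Nat.card {U : Submodule F (Fin n → F) // finrank F U = r} with hN
  have hNr : N * ∏ i ∈ Finset.range r, (q ^ r - q ^ i) =
      ∏ i ∈ Finset.range r, (q ^ n - q ^ i) := by
    have h0 := SCB.card_grass (K := F) (W := Fin n → F) r (by rw [hfrV]; exact hr)
    rw [hfrV] at h0
    simp only [hq] at h0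
    exact h0
  have hgauss_eq : gaussBinom q n r = (N : ℝ) := by
    have hc : (N : ℝ) * SCB.Pprod q r r = SCB.Pprod q n r := by
      rw [← SCB.cast_nat_prod hq2 (le_refl r), ← SCB.cast_nat_prod hq2 hr, ← Nat.cast_mul, hNr]
    rw [SCB.gauss_eq_div, ← hc, mul_div_assoc,
      div_self (ne_of_gt (SCB.Pprod_pos hq2 (le_refl r))), mul_one]
  -- Step 2 : per (C, d) real bound
  have hterm : ∀ C ∈ 𝒞, ∀ d : ℕ,
      (Nat.card {U : Submodule F (Fin n → F) // finrank F U = r ∧ dI U C = d} : ℝ) ≤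
        (q : ℝ) ^ (d ^ 2) * gaussBinom q r d * gaussBinom q (n - r) d := by
    intro C hC d
    have hCr : finrank F ↥C = r := hdim C hC
    have hfacts : ∀ U : Submodule F (Fin n → F), finrank F U = r → dI U C = d →
        d ≤ r ∧ r + d ≤ n ∧ finrank F ↥(U ⊓ C) = r - d := by
      intro U hU hdI
      have hsum := Submodule.finrank_sup_add_finrank_inf_eq U C
      rw [hU, hCr] at hsum
      have hge : finrank F ↥U ≤ finrank F ↥(U ⊔ C) := Submodule.finrank_mono le_sup_left
      rw [hU] at hge
      have hle := Submodule.finrank_le (U ⊔ C)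
      rw [hfrV] at hle
      simp only [dI, hU, hCr, min_self] at hdI
      omega
    by_cases hcase : d ≤ r ∧ r + d ≤ n
    · obtain ⟨hdr, hdn⟩ := hcase
      have hequiv : {U : Submodule F (Fin n → F) // finrank F U = r ∧ dI U C = d} ≃
          {U : Submodule F (Fin n → F) // finrank F U = r ∧ finrank F ↥(U ⊓ C) = r - d} :=
        Equiv.subtypeEquivRight (fun U => by
          constructor
          · rintro ⟨hU, hdI⟩
            exact ⟨hU, (hfacts U hU hdI).2.2⟩
          · rintro ⟨hU, hinf⟩
            refine ⟨hU, ?_⟩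
            have hsum := Submodule.finrank_sup_add_finrank_inf_eq U C
            rw [hU, hCr, hinf] at hsum
            have hge : finrank F ↥U ≤ finrank F ↥(U ⊔ C) := Submodule.finrank_mono le_sup_left
            rw [hU] at hge
            simp only [dI, hU, hCr, min_self]
            omega)
      rw [Nat.card_congr hequiv]
      have hineq := SCB.card_Sd_mul_le (K := F) (W := Fin n → F) C r d hdr
      have hM := SCB.card_grass (K := F) (W := ↥C) (r - d) (by rw [hCr]; omega)
      rw [hCr] at hM
      simp only [hq] at hM
      have hfq : finrank F ((Fin n → F) ⧸ C) = n - r := by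
        have h7 := Submodule.finrank_quotient_add_finrank C
        rw [hCr, hfrV] at h7
        omega
      have hY := SCB.card_Y (K := F) (W := Fin n → F) C d (by rw [hfq]; omega)
      rw [hCr, hfq] at hY
      rw [hY] at hineq
      simp only [hq] at hineq
      -- cast to ℝ
      have hcast : (Nat.card {U : Submodule F (Fin n → F) // finrank F U = r ∧
            finrank F ↥(U ⊓ C) = r - d} : ℝ) *
          ((q : ℝ) ^ ((r - d) * d) * SCB.Pprod q d d) ≤
          (Nat.card {X : Submodule F ↥C // finrank F X = r - d} : ℝ) *
            ((q : ℝ) ^ (r * d) * SCB.Pprod q (n - r) d) := by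
        have hcc := (Nat.cast_le (α := ℝ)).mpr hineq
        rw [Nat.cast_mul, Nat.cast_mul, Nat.cast_mul, Nat.cast_mul, Nat.cast_pow, Nat.cast_pow,
          SCB.cast_nat_prod hq2 (le_refl d),
          SCB.cast_nat_prod hq2 (show d ≤ n - r by omega)] at hcc
        exact hcc
      have hMval : (Nat.card {X : Submodule F ↥C // finrank F X = r - d} : ℝ) =
          gaussBinom q r d := by
        have hcc : (Nat.card {X : Submodule F ↥C // finrank F X = r - d} : ℝ) *
            SCB.Pprod q (r - d) (r - d) = SCB.Pprod q r (r - d) := by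
          rw [← SCB.cast_nat_prod hq2 (le_refl (r - d)),
            ← SCB.cast_nat_prod hq2 (show r - d ≤ r by omega), ← Nat.cast_mul, hM]
        rw [← SCB.gauss_symm hq2 hdr, SCB.gauss_eq_div, ← hcc, mul_div_assoc,
          div_self (ne_of_gt (SCB.Pprod_pos hq2 (le_refl (r - d)))), mul_one]
      have hApos : (0 : ℝ) < (q : ℝ) ^ ((r - d) * d) * SCB.Pprod q d d :=
        mul_pos (pow_pos (SCB.hq0 hq2) _) (SCB.Pprod_pos hq2 (le_refl d))
      rw [← le_div_iff₀ hApos] at hcast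
      refine le_trans hcast (le_of_eq ?_)
      rw [hMval, SCB.gauss_eq_div (m := n - r) (k := d)]
      have hpow : (q : ℝ) ^ (r * d) = (q : ℝ) ^ ((r - d) * d) * (q : ℝ) ^ (d ^ 2) := by
        rw [← pow_add]
        congr 1
        have h10 : d * d ≤ r * d := Nat.mul_le_mul_right d hdr
        have h8 : (r - d) * d = r * d - d * d := by rw [Nat.sub_mul]
        have h9 : d ^ 2 = d * d := sq d
        omega
      rw [hpow]
      have hPd : SCB.Pprod q d d ≠ 0 := ne_of_gt (SCB.Pprod_pos hq2 (le_refl d))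
      have hqz : (q : ℝ) ≠ 0 := ne_of_gt (SCB.hq0 hq2)
      field_simp
    · have hempty : IsEmpty {U : Submodule F (Fin n → F) // finrank F U = r ∧ dI U C = d} := by
        constructor
        rintro ⟨U, hU, hdI⟩
        exact hcase ⟨(hfacts U hU hdI).1, (hfacts U hU hdI).2.1⟩
      rw [Nat.card_of_isEmpty]
      push_cast
      have h1 : (0:ℝ) ≤ (q : ℝ) ^ (d ^ 2) := pow_nonneg (le_of_lt (SCB.hq0 hq2)) _
      exact mul_nonneg (mul_nonneg h1 (SCB.gauss_nonneg hq2 r d)) (SCB.gauss_nonneg hq2 (n - r) d)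
  -- Step 3 : covering inequality
  have hpick : ∀ U : {U : Submodule F (Fin n → F) // finrank F U = r},
      ∃ C, C ∈ 𝒞 ∧ dI U.1 C ≤ ρ := by
    intro U
    obtain ⟨C, hC1, hC2⟩ := hcov U.1 U.2
    exact ⟨C, hC1, hC2⟩
  set Θ : {U : Submodule F (Fin n → F) // finrank F U = r} →
      Σ C : {C // C ∈ 𝒞}, Σ d : Fin (ρ + 1),
        {U : Submodule F (Fin n → F) // finrank F U = r ∧ dI U C.1 = d.1} :=
    fun U => ⟨⟨(hpick U).choose, (hpick U).choose_spec.1⟩,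
      ⟨⟨dI U.1 (hpick U).choose, Nat.lt_succ_of_le (hpick U).choose_spec.2⟩,
        ⟨U.1, U.2, rfl⟩⟩⟩ with hΘ
  have hΘinj : Function.Injective Θ := by
    have hcomp : Function.Injective ((fun p : Σ C : {C // C ∈ 𝒞}, Σ d : Fin (ρ + 1),
        {U : Submodule F (Fin n → F) // finrank F U = r ∧ dI U C.1 = d.1} => p.2.2.1) ∘ Θ) := by
      intro U U' h
      exact Subtype.ext h
    exact Function.Injective.of_comp hcomp
  have hNle : N ≤ ∑ C ∈ 𝒞, ∑ d ∈ Finset.range (ρ + 1),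
      Nat.card {U : Submodule F (Fin n → F) // finrank F U = r ∧ dI U C = d} := by
    calc N ≤ Nat.card (Σ C : {C // C ∈ 𝒞}, Σ d : Fin (ρ + 1),
          {U : Submodule F (Fin n → F) // finrank F U = r ∧ dI U C.1 = d.1}) :=
        Nat.card_le_card_of_injective Θ hΘinj
      _ = ∑ C : {C // C ∈ 𝒞}, ∑ d : Fin (ρ + 1),
          Nat.card {U : Submodule F (Fin n → F) // finrank F U = r ∧ dI U C.1 = d.1} := by
          rw [SCB.nat_card_sigma]
          exact Finset.sum_congr rfl fun C _ => SCB.nat_card_sigma _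
      _ = ∑ C ∈ 𝒞, ∑ d ∈ Finset.range (ρ + 1),
          Nat.card {U : Submodule F (Fin n → F) // finrank F U = r ∧ dI U C = d} := by
          rw [← Finset.sum_coe_sort 𝒞 (fun C => ∑ d ∈ Finset.range (ρ + 1),
            Nat.card {U : Submodule F (Fin n → F) // finrank F U = r ∧ dI U C = d})]
          exact Finset.sum_congr rfl fun C _ =>
            Fin.sum_univ_eq_sum_range (fun d =>
              Nat.card {U : Submodule F (Fin n → F) // finrank F U = r ∧ dI U C.1 = d}) (ρ + 1)
  -- Step 4 : assemble over ℝ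
  have hmain : (N : ℝ) ≤ (𝒞.card : ℝ) * ballVol q n r ρ := by
    calc (N : ℝ) ≤ ∑ C ∈ 𝒞, ∑ d ∈ Finset.range (ρ + 1),
          (Nat.card {U : Submodule F (Fin n → F) // finrank F U = r ∧ dI U C = d} : ℝ) := by
          push_cast [← Nat.cast_sum]
          exact_mod_cast hNle
      _ ≤ ∑ C ∈ 𝒞, ∑ d ∈ Finset.range (ρ + 1),
          (q : ℝ) ^ (d ^ 2) * gaussBinom q r d * gaussBinom q (n - r) d :=
          Finset.sum_le_sum fun C hC => Finset.sum_le_sum fun d _ => hterm C hC d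
      _ = (𝒞.card : ℝ) * ballVol q n r ρ := by
          rw [Finset.sum_const, nsmul_eq_mul]
          rfl
  have hVpos : 0 < ballVol q n r ρ := by
    have h0 : ∀ d ∈ Finset.range (ρ + 1),
        (0:ℝ) ≤ (q : ℝ) ^ (d ^ 2) * gaussBinom q r d * gaussBinom q (n - r) d := by
      intro d _
      have h1 : (0:ℝ) ≤ (q : ℝ) ^ (d ^ 2) := pow_nonneg (le_of_lt (SCB.hq0 hq2)) _
      exact mul_nonneg (mul_nonneg h1 (SCB.gauss_nonneg hq2 r d)) (SCB.gauss_nonneg hq2 (n - r) d)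
    have hone : (q : ℝ) ^ (0 ^ 2) * gaussBinom q r 0 * gaussBinom q (n - r) 0 = 1 := by
      simp [gaussBinom]
    calc (0:ℝ) < 1 := one_pos
      _ = (q : ℝ) ^ (0 ^ 2) * gaussBinom q r 0 * gaussBinom q (n - r) 0 := hone.symm
      _ ≤ ballVol q n r ρ :=
        Finset.single_le_sum h0 (Finset.mem_range.mpr (Nat.succ_pos ρ))
  rw [div_le_iff₀ hVpos, hgauss_eq]
  exact hmain
end

section
/- For r ≤ ⌊n/2⌋ and 0 ≤ t ≤ r, the volume V_C(t) = ∑_{d=0}^{t} q^{d²}·[r choose d]_q·[n-r choose d]_q of a ball of radius t in the Grassmannian E_r(q,n) satisfies q^{t(n-t)} ≤ V_C(t) < K_q^{-2}·q^{t(n-t)}, where K_q = ∏_{j=1}^∞(1-q^{-j}). -/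
namespace BVAux

noncomputable def P (q t : ℕ) : ℝ := ∏ j ∈ Finset.range t, (1 - ((q : ℝ))⁻¹ ^ (j + 1))

variable {q : ℕ}

lemma q1 (hq : 2 ≤ q) : (1:ℝ) < (q:ℝ) := by exact_mod_cast Nat.lt_of_lt_of_le one_lt_two hq

lemma q0 (hq : 2 ≤ q) : (0:ℝ) < (q:ℝ) := lt_trans one_pos (q1 hq)

lemma x_pos (hq : 2 ≤ q) : (0:ℝ) < (q:ℝ)⁻¹ := inv_pos.2 (q0 hq)

lemma x_lt_one (hq : 2 ≤ q) : (q:ℝ)⁻¹ < 1 := inv_lt_one_of_one_lt₀ (q1 hq)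

lemma x_le_half (hq : 2 ≤ q) : (q:ℝ)⁻¹ ≤ 1/2 := by
  rw [inv_le_comm₀ (q0 hq) (by norm_num)]
  · norm_num; exact_mod_cast hq

lemma xp_lt_one (hq : 2 ≤ q) (j : ℕ) : ((q:ℝ))⁻¹ ^ (j+1) < 1 :=
  pow_lt_one₀ (x_pos hq).le (x_lt_one hq) (Nat.succ_ne_zero j)

lemma f_pos (hq : 2 ≤ q) (j : ℕ) : (0:ℝ) < 1 - ((q:ℝ))⁻¹ ^ (j+1) :=
  sub_pos.2 (xp_lt_one hq j)

lemma f_le_one (hq : 2 ≤ q) (j : ℕ) : 1 - ((q:ℝ))⁻¹ ^ (j+1) ≤ 1 := by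
  have := pow_nonneg (x_pos hq).le (j+1); linarith

lemma P_pos (hq : 2 ≤ q) (t : ℕ) : 0 < P q t :=
  Finset.prod_pos fun j _ => f_pos hq j

lemma P_le_one (hq : 2 ≤ q) (t : ℕ) : P q t ≤ 1 :=
  Finset.prod_le_one (fun j _ => (f_pos hq j).le) (fun j _ => f_le_one hq j)

lemma summable_log (hq : 2 ≤ q) :
    Summable fun j : ℕ => Real.log (1 - ((q:ℝ))⁻¹ ^ (j + 1)) := by
  have hgeo : Summable (fun j : ℕ => 2 * ((q:ℝ)⁻¹ * (q:ℝ)⁻¹ ^ j)) :=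
    ((summable_geometric_of_lt_one (x_pos hq).le (x_lt_one hq)).mul_left _).mul_left 2
  refine Summable.of_abs (Summable.of_nonneg_of_le (fun j => abs_nonneg _) (fun j => ?_) hgeo)
  set f := 1 - ((q:ℝ))⁻¹ ^ (j+1) with hf
  have hfp := f_pos hq j
  have hxj : ((q:ℝ))⁻¹ ^ (j+1) ≤ (q:ℝ)⁻¹ := by
    calc ((q:ℝ))⁻¹ ^ (j+1) ≤ ((q:ℝ))⁻¹ ^ 1 :=
          pow_le_pow_of_le_one (x_pos hq).le (x_lt_one hq).le (by omega)
      _ = (q:ℝ)⁻¹ := pow_one _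
  have hfhalf : (1:ℝ)/2 ≤ f := by have := x_le_half hq; rw [hf]; linarith
  have h1 : |Real.log f| = -Real.log f := by
    rw [abs_of_nonpos (Real.log_nonpos hfp.le (f_le_one hq j))]
  have h2 : 1 - f⁻¹ ≤ Real.log f := Real.one_sub_inv_le_log_of_pos hfp
  have h3 : f⁻¹ ≤ 2 := by
    rw [inv_le_comm₀ hfp (by norm_num)]; linarith
  have hf1 : (0:ℝ) ≤ 1 - f := by rw [hf, sub_sub_cancel]; positivity
  have h4 : f⁻¹ - 1 ≤ 2 * (1 - f) := by
    have hff : f * f⁻¹ = 1 := mul_inv_cancel₀ hfp.ne'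
    have hid : (1 - f) * f⁻¹ = f⁻¹ - 1 := by rw [sub_mul, one_mul, hff]
    nlinarith [mul_le_mul_of_nonneg_left h3 hf1]
  have h5 : (1:ℝ) - f = (q:ℝ)⁻¹ * (q:ℝ)⁻¹ ^ j := by rw [hf, sub_sub_cancel]; ring
  rw [h1]; rw [h5] at h4; linarith

lemma hasProd_exp (hq : 2 ≤ q) :
    HasProd (fun j : ℕ => 1 - ((q:ℝ))⁻¹ ^ (j + 1))
      (Real.exp (∑' j : ℕ, Real.log (1 - ((q:ℝ))⁻¹ ^ (j + 1)))) := by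
  have h := ((summable_log hq).hasSum).rexp
  have he : (Real.exp ∘ fun j : ℕ => Real.log (1 - ((q:ℝ))⁻¹ ^ (j + 1)))
      = fun j : ℕ => 1 - ((q:ℝ))⁻¹ ^ (j + 1) :=
    funext fun j => Real.exp_log (f_pos hq j)
  rwa [he] at h

lemma Kq_eq (hq : 2 ≤ q) :
    Kq q = Real.exp (∑' j : ℕ, Real.log (1 - ((q:ℝ))⁻¹ ^ (j + 1))) :=
  (hasProd_exp hq).tprod_eq

lemma Kq_pos (hq : 2 ≤ q) : 0 < Kq q := by rw [Kq_eq hq]; exact Real.exp_pos _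

lemma hasProd_Kq (hq : 2 ≤ q) :
    HasProd (fun j : ℕ => 1 - ((q:ℝ))⁻¹ ^ (j + 1)) (Kq q) := by
  rw [Kq_eq hq]; exact hasProd_exp hq

lemma Kq_le_P (hq : 2 ≤ q) (t : ℕ) : Kq q ≤ P q t := by
  refine le_of_tendsto (hasProd_Kq hq) ?_
  filter_upwards [Filter.eventually_ge_atTop (Finset.range t)] with s hs
  rw [← Finset.prod_sdiff hs]
  exact mul_le_of_le_one_left (P_pos hq t).le
    (Finset.prod_le_one (fun j _ => (f_pos hq j).le) (fun j _ => f_le_one hq j))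

lemma Kq_lt_one (hq : 2 ≤ q) : Kq q < 1 := by
  refine lt_of_le_of_lt (Kq_le_P hq 1) ?_
  have := x_pos hq
  simp only [P, Finset.prod_range_one, pow_one]
  linarith

lemma denom_pos (hq : 2 ≤ q) {i t : ℕ} (h : i < t) : (0:ℝ) < (q:ℝ)^t - (q:ℝ)^i :=
  sub_pos.2 (pow_lt_pow_right₀ (q1 hq) h)

/-- `1 - q⁻¹^(b-a) = (q^b - q^a)/q^b` for `a ≤ b`. -/
lemma one_sub_xpow (hq : 2 ≤ q) {a b : ℕ} (hab : a ≤ b) :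
    1 - ((q:ℝ))⁻¹ ^ (b - a) = ((q:ℝ)^b - (q:ℝ)^a) / (q:ℝ)^b := by
  have hqb : ((q:ℝ))^b ≠ 0 := (pow_pos (q0 hq) b).ne'
  rw [eq_div_iff hqb, sub_mul, one_mul, inv_pow, inv_mul_eq_div]
  have h2 : (q:ℝ)^b / (q:ℝ)^(b-a) = (q:ℝ)^a := by
    rw [div_eq_iff (pow_ne_zero _ (q0 hq).ne'), ← pow_add]
    congr 1
    omega
  rw [h2]

lemma factor_eq (hq : 2 ≤ q) {m t i : ℕ} (hi : i < t) (htm : t ≤ m) :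
    ((q:ℝ)^m - (q:ℝ)^i) / ((q:ℝ)^t - (q:ℝ)^i)
      = (q:ℝ)^(m-t) * (1 - ((q:ℝ))⁻¹ ^ (m - i)) / (1 - ((q:ℝ))⁻¹ ^ (t - i)) := by
  have him : i ≤ m := le_of_lt (lt_of_lt_of_le hi htm)
  rw [one_sub_xpow hq him, one_sub_xpow hq hi.le]
  have hqt : ((q:ℝ))^t ≠ 0 := (pow_pos (q0 hq) t).ne'
  have hqm : ((q:ℝ))^m ≠ 0 := (pow_pos (q0 hq) m).ne'
  have hden : (q:ℝ)^t - (q:ℝ)^i ≠ 0 := (denom_pos hq hi).ne'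
  have hmt : (q:ℝ)^(m-t) * (q:ℝ)^t = (q:ℝ)^m := by rw [← pow_add]; congr 1; omega
  have hstep : (q:ℝ)^(m-t) * (((q:ℝ)^m - (q:ℝ)^i)/(q:ℝ)^m) / (((q:ℝ)^t - (q:ℝ)^i)/(q:ℝ)^t)
      = (((q:ℝ)^(m-t) * (q:ℝ)^t) * ((q:ℝ)^m - (q:ℝ)^i)) / ((q:ℝ)^m * ((q:ℝ)^t - (q:ℝ)^i)) := by
    field_simp
  rw [hstep, hmt, mul_div_mul_left _ _ hqm]

lemma P_eq_reflect (q t : ℕ) :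
    ∏ i ∈ Finset.range t, (1 - ((q:ℝ))⁻¹ ^ (t - i)) = P q t := by
  rw [P, ← Finset.prod_range_reflect]
  refine Finset.prod_congr rfl fun i hi => ?_
  rw [Finset.mem_range] at hi
  have e : t - (t - 1 - i) = i + 1 := by omega
  rw [e]

lemma gauss_eq (hq : 2 ≤ q) {m t : ℕ} (htm : t ≤ m) :
    gaussBinom q m t
      = (q:ℝ)^(t*(m-t)) * (∏ i ∈ Finset.range t, (1 - ((q:ℝ))⁻¹ ^ (m - i))) / P q t := by
  rw [gaussBinom, Finset.prod_congr rfl (fun i hi => factor_eq hq (Finset.mem_range.1 hi) htm)]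
  simp only [mul_div_assoc]
  rw [Finset.prod_mul_distrib, Finset.prod_const, Finset.card_range, Finset.prod_div_distrib, P_eq_reflect,
    ← pow_mul, Nat.mul_comm]


lemma num_factor_mem (hq : 2 ≤ q) (m i : ℕ) :
    0 ≤ 1 - ((q:ℝ))⁻¹ ^ (m - i) ∧ 1 - ((q:ℝ))⁻¹ ^ (m - i) ≤ 1 := by
  have h1 : ((q:ℝ))⁻¹ ^ (m - i) ≤ 1 := pow_le_one₀ (x_pos hq).le (x_lt_one hq).le
  have h2 : 0 ≤ ((q:ℝ))⁻¹ ^ (m - i) := pow_nonneg (x_pos hq).le _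
  constructor <;> linarith

lemma num_prod_le_one (hq : 2 ≤ q) (m t : ℕ) :
    ∏ i ∈ Finset.range t, (1 - ((q:ℝ))⁻¹ ^ (m - i)) ≤ 1 :=
  Finset.prod_le_one (fun i _ => (num_factor_mem hq m i).1) (fun i _ => (num_factor_mem hq m i).2)

lemma num_prod_nonneg (hq : 2 ≤ q) (m t : ℕ) :
    0 ≤ ∏ i ∈ Finset.range t, (1 - ((q:ℝ))⁻¹ ^ (m - i)) :=
  Finset.prod_nonneg (fun i _ => (num_factor_mem hq m i).1)

lemma gauss_le (hq : 2 ≤ q) {m t : ℕ} (htm : t ≤ m) :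
    gaussBinom q m t ≤ (q:ℝ)^(t*(m-t)) / P q t := by
  rw [gauss_eq hq htm]
  have hP := P_pos hq t
  have hq' : (0:ℝ) ≤ (q:ℝ)^(t*(m-t)) := pow_nonneg (q0 hq).le _
  rw [div_le_div_iff_of_pos_right hP]
  calc (q:ℝ)^(t*(m-t)) * (∏ i ∈ Finset.range t, (1 - ((q:ℝ))⁻¹ ^ (m - i)))
      ≤ (q:ℝ)^(t*(m-t)) * 1 := by
        exact mul_le_mul_of_nonneg_left (num_prod_le_one hq m t) hq'
    _ = (q:ℝ)^(t*(m-t)) := mul_one _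

lemma gauss_le_refined (hq : 2 ≤ q) {m t : ℕ} (ht1 : 1 ≤ t) (htm : t ≤ m) :
    gaussBinom q m t ≤ (q:ℝ)^(t*(m-t)) * (1 - ((q:ℝ))⁻¹ ^ (m - t + 1)) / P q t := by
  obtain ⟨u, rfl⟩ : ∃ u, t = u + 1 := ⟨t - 1, by omega⟩
  rw [gauss_eq hq htm]
  have hP := P_pos hq (u+1)
  have hq' : (0:ℝ) ≤ (q:ℝ)^((u+1)*(m-(u+1))) := pow_nonneg (q0 hq).le _
  rw [div_le_div_iff_of_pos_right hP]
  have hnn : (0:ℝ) ≤ 1 - ((q:ℝ))⁻¹ ^ (m - (u+1) + 1) :=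
    sub_nonneg.2 (pow_le_one₀ (x_pos hq).le (x_lt_one hq).le)
  have hsplit : ∏ i ∈ Finset.range (u+1), (1 - ((q:ℝ))⁻¹ ^ (m - i))
      ≤ 1 - ((q:ℝ))⁻¹ ^ (m - (u+1) + 1) := by
    rw [Finset.prod_range_succ]
    have he : m - u = m - (u+1) + 1 := by omega
    rw [he]
    exact mul_le_of_le_one_left hnn (num_prod_le_one hq m u)
  exact mul_le_mul_of_nonneg_left hsplit hq'

lemma gauss_lower (hq : 2 ≤ q) {m t : ℕ} (htm : t ≤ m) :
    (q:ℝ)^(t*(m-t)) ≤ gaussBinom q m t := by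
  have hstep : ∀ i ∈ Finset.range t,
      (q:ℝ)^(m-t) ≤ ((q:ℝ)^m - (q:ℝ)^i) / ((q:ℝ)^t - (q:ℝ)^i) := by
    intro i hi
    rw [Finset.mem_range] at hi
    rw [le_div_iff₀ (denom_pos hq hi)]
    have hmt : (q:ℝ)^(m-t) * (q:ℝ)^t = (q:ℝ)^m := by rw [← pow_add]; congr 1; omega
    have h2 : (q:ℝ)^i ≤ (q:ℝ)^(m-t) * (q:ℝ)^i := by
      have : (1:ℝ) ≤ (q:ℝ)^(m-t) := one_le_pow₀ (q1 hq).le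
      nlinarith [pow_pos (q0 hq) i]
    nlinarith
  calc (q:ℝ)^(t*(m-t)) = ∏ _i ∈ Finset.range t, (q:ℝ)^(m-t) := by
        rw [Finset.prod_const, Finset.card_range, ← pow_mul, Nat.mul_comm]
    _ ≤ gaussBinom q m t := by
        rw [gaussBinom]
        exact Finset.prod_le_prod (fun i _ => (pow_pos (q0 hq) _).le) hstep

lemma gauss_nonneg (hq : 2 ≤ q) {m t : ℕ} (htm : t ≤ m) : 0 ≤ gaussBinom q m t :=
  le_trans (pow_pos (q0 hq) _).le (gauss_lower hq htm)


lemma exp_split {t r n : ℕ} (ht : t ≤ r) (h2r : 2 * r ≤ n) :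
    t * (n - t) = t ^ 2 + t * (r - t) + t * (n - r - t) := by
  obtain ⟨a, ha⟩ : ∃ a, r = t + a := ⟨r - t, by omega⟩
  obtain ⟨b, hb⟩ : ∃ b, n - r = t + b := ⟨n - r - t, by omega⟩
  have h1 : n - t = t + a + b := by omega
  have h2 : r - t = a := by omega
  have h3 : n - r - t = b := by omega
  rw [h1, h2, h3]
  ring

lemma ballVol_upper (q n r : ℕ) (hq : 2 ≤ q) (h2r : 2 * r ≤ n) :
    ∀ t, t ≤ r → ballVol q n r t < ((Kq q) ^ 2)⁻¹ * (q:ℝ) ^ (t * (n - t)) := by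
  have hK := Kq_pos hq
  have hK1 := Kq_lt_one hq
  intro t
  induction t with
  | zero =>
    intro _
    have h0 : ballVol q n r 0 = 1 := by simp [ballVol, gaussBinom]
    rw [h0, Nat.zero_mul, pow_zero, mul_one]
    have hKK : (Kq q) ^ 2 < 1 := by nlinarith
    exact (one_lt_inv₀ (by positivity)).2 hKK
  | succ u ih =>
    intro ht
    have ihu := ih (by omega)
    have hur : u + 1 ≤ r := ht
    have hunr : u + 1 ≤ n - r := by omega
    have hP := P_pos hq (u + 1)
    have hKP := Kq_le_P hq (u + 1)
    set e := n - 2 * u - 1 with he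
    -- term bound
    have G1 := gauss_le hq hur
    have G2 := gauss_le_refined hq (by omega) hunr
    have e2 : n - r - (u + 1) + 1 = n - r - u := by omega
    rw [e2] at G2
    have hc : 1 - ((q:ℝ))⁻¹ ^ (n - r - u) ≤ 1 - ((q:ℝ))⁻¹ ^ e := by
      have := pow_le_pow_of_le_one (x_pos hq).le (x_lt_one hq).le
        (show n - r - u ≤ e by omega)
      linarith
    have hcnn : (0:ℝ) ≤ 1 - ((q:ℝ))⁻¹ ^ (n - r - u) :=
      sub_nonneg.2 (pow_le_one₀ (x_pos hq).le (x_lt_one hq).le)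
    have hcnn' : (0:ℝ) ≤ 1 - ((q:ℝ))⁻¹ ^ e :=
      sub_nonneg.2 (pow_le_one₀ (x_pos hq).le (x_lt_one hq).le)
    have hexp : (q:ℝ) ^ ((u+1) ^ 2) * (q:ℝ) ^ ((u+1) * (r - (u+1))) *
        (q:ℝ) ^ ((u+1) * (n - r - (u+1))) = (q:ℝ) ^ ((u+1) * (n - (u+1))) := by
      rw [← pow_add, ← pow_add]
      congr 1
      exact (exp_split hur h2r).symm
    have hinv : ((P q (u+1)) ^ 2)⁻¹ ≤ ((Kq q) ^ 2)⁻¹ := by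
      apply inv_anti₀ (by positivity)
      exact pow_le_pow_left₀ hK.le hKP 2
    have hterm : (q:ℝ) ^ ((u+1) ^ 2) * gaussBinom q r (u+1) * gaussBinom q (n - r) (u+1)
        ≤ ((Kq q) ^ 2)⁻¹ * (q:ℝ) ^ ((u+1) * (n - (u+1))) * (1 - ((q:ℝ))⁻¹ ^ e) := by
      have s1 : (q:ℝ) ^ ((u+1) ^ 2) * gaussBinom q r (u+1) * gaussBinom q (n - r) (u+1)
          ≤ (q:ℝ) ^ ((u+1) ^ 2) * ((q:ℝ) ^ ((u+1) * (r - (u+1))) / P q (u+1)) *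
            ((q:ℝ) ^ ((u+1) * (n - r - (u+1))) * (1 - ((q:ℝ))⁻¹ ^ (n - r - u)) / P q (u+1)) := by
        have n1 : (0:ℝ) ≤ (q:ℝ) ^ ((u+1) ^ 2) := by positivity
        have n2 : (0:ℝ) ≤ (q:ℝ) ^ ((u+1) ^ 2) *
            ((q:ℝ) ^ ((u+1) * (r - (u+1))) / P q (u+1)) := by positivity
        exact mul_le_mul (mul_le_mul_of_nonneg_left G1 n1) G2 (gauss_nonneg hq hunr) n2
      have s2 : (q:ℝ) ^ ((u+1) ^ 2) * ((q:ℝ) ^ ((u+1) * (r - (u+1))) / P q (u+1)) *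
            ((q:ℝ) ^ ((u+1) * (n - r - (u+1))) * (1 - ((q:ℝ))⁻¹ ^ (n - r - u)) / P q (u+1))
          = (q:ℝ) ^ ((u+1) * (n - (u+1))) * (1 - ((q:ℝ))⁻¹ ^ (n - r - u)) *
            ((P q (u+1)) ^ 2)⁻¹ := by
        rw [← hexp]
        field_simp
      have s3 : (q:ℝ) ^ ((u+1) * (n - (u+1))) * (1 - ((q:ℝ))⁻¹ ^ (n - r - u)) *
            ((P q (u+1)) ^ 2)⁻¹
          ≤ (q:ℝ) ^ ((u+1) * (n - (u+1))) * (1 - ((q:ℝ))⁻¹ ^ e) * ((Kq q) ^ 2)⁻¹ := by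
        have n3 : (0:ℝ) ≤ (q:ℝ) ^ ((u+1) * (n - (u+1))) := by positivity
        exact mul_le_mul (mul_le_mul_of_nonneg_left hc n3) hinv (by positivity) (by positivity)
      calc (q:ℝ) ^ ((u+1) ^ 2) * gaussBinom q r (u+1) * gaussBinom q (n - r) (u+1)
          ≤ _ := s1
        _ = _ := s2
        _ ≤ _ := s3
        _ = ((Kq q) ^ 2)⁻¹ * (q:ℝ) ^ ((u+1) * (n - (u+1))) * (1 - ((q:ℝ))⁻¹ ^ e) := by ring
    -- split the sum
    have hsplit : ballVol q n r (u + 1) = ballVol q n r u +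
        (q:ℝ) ^ ((u+1) ^ 2) * gaussBinom q r (u+1) * gaussBinom q (n - r) (u+1) := by
      simp [ballVol, Finset.sum_range_succ]
    -- exponent relation
    have hTe : (u+1) * (n - (u+1)) = u * (n - u) + e := by
      obtain ⟨m, hm⟩ : ∃ m, n = 2 * u + 2 + m := ⟨n - 2 * u - 2, by omega⟩
      have d1 : n - (u + 1) = u + 1 + m := by omega
      have d2 : n - u = u + 2 + m := by omega
      have d3 : e = m + 1 := by omega
      rw [d1, d2, d3]
      ring
    have hq_eq : (q:ℝ) ^ (u * (n - u)) =
        (q:ℝ) ^ ((u+1) * (n - (u+1))) * ((q:ℝ))⁻¹ ^ e := by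
      rw [hTe, pow_add, mul_assoc, inv_pow, mul_inv_cancel₀ (pow_pos (q0 hq) e).ne', mul_one]
    calc ballVol q n r (u + 1)
        = ballVol q n r u +
          (q:ℝ) ^ ((u+1) ^ 2) * gaussBinom q r (u+1) * gaussBinom q (n - r) (u+1) := hsplit
      _ < ((Kq q) ^ 2)⁻¹ * (q:ℝ) ^ (u * (n - u)) +
          ((Kq q) ^ 2)⁻¹ * (q:ℝ) ^ ((u+1) * (n - (u+1))) * (1 - ((q:ℝ))⁻¹ ^ e) :=
        add_lt_add_of_lt_of_le ihu hterm
      _ = ((Kq q) ^ 2)⁻¹ * (q:ℝ) ^ ((u + 1) * (n - (u + 1))) := by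
          rw [hq_eq]; ring

end BVAux

open BVAux in
/-- Bounds on the volume of balls in the Grassmannian:
`q^{t(n-t)} ≤ V_C(t) < K_q^{-2} q^{t(n-t)}`. -/
theorem ballVol_bounds (q n r t : ℕ)
    (hpp : ∃ p k : ℕ, p.Prime ∧ 0 < k ∧ q = p ^ k) (hq : 2 ≤ q)
    (hr : r ≤ n / 2) (ht : t ≤ r) :
    (q : ℝ) ^ (t * (n - t)) ≤ ballVol q n r t ∧
    ballVol q n r t < ((Kq q) ^ 2)⁻¹ * (q : ℝ) ^ (t * (n - t)) := by
  have h2r : 2 * r ≤ n := by omega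
  have htn : t ≤ n - r := by omega
  constructor
  · have hterm : (q:ℝ) ^ (t * (n - t)) ≤
        (q:ℝ) ^ (t ^ 2) * gaussBinom q r t * gaussBinom q (n - r) t := by
      rw [exp_split ht h2r, pow_add, pow_add]
      have g1 := gauss_lower hq ht
      have g2 := gauss_lower hq htn
      have n1 : (0:ℝ) ≤ (q:ℝ) ^ (t ^ 2) := by positivity
      have n2 : (0:ℝ) ≤ (q:ℝ) ^ (t ^ 2) * (q:ℝ) ^ (t * (r - t)) := by positivity
      exact mul_le_mul (mul_le_mul_of_nonneg_left g1 n1) g2 (by positivity)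
        (mul_nonneg n1 (gauss_nonneg hq ht))
    refine le_trans hterm ?_
    rw [ballVol]
    refine Finset.single_le_sum (f := fun d =>
      (q:ℝ) ^ (d ^ 2) * gaussBinom q r d * gaussBinom q (n - r) d) ?_
      (Finset.self_mem_range_succ t)
    intro d hd
    rw [Finset.mem_range] at hd
    have hd1 : d ≤ r := by omega
    have hd2 : d ≤ n - r := by omega
    have := gauss_nonneg hq hd1
    have := gauss_nonneg hq hd2
    positivity
  · exact ballVol_upper q n r hq h2r t ht
end

section
/- Permuted liftings give covering codes: let 𝒞 ⊆ GF(q)^{r×(n-r)} be a rank-metric code with the property that every matrix in GF(q)^{r×(n-r)} is within rank distance ρ of some element of 𝒞. Then every r-dimensional subspace U of GF(q)^n can be written as the row space of a matrix π(I_r | V) for some r-subset-determined column permutation π and some V ∈ GF(q)^{r×(n-r)}, and consequently the code L(𝒞) = { row space of π_J(I_r | C) : J an r-subset of {0,…,n-1}, C ∈ 𝒞 } has injection covering radius at most ρ and cardinality at most C(n,r)·|𝒞|. -/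
/-- The permuted lifting `(I_r | C)` with identity columns placed in positions `J`
(in increasing order) and the columns of `C` in the remaining positions (in increasing
order): this is `π_J(I_r | C)`. -/
noncomputable def liftPerm {F : Type*} [Field F] {n r : ℕ}
    (J : {s : Finset (Fin n) // s.card = r}) (C : Matrix (Fin r) (Fin (n - r)) F) :
    Matrix (Fin r) (Fin n) F := fun i j =>
  if h : j ∈ J.1 then (if (J.1.orderIsoOfFin J.2).symm ⟨j, h⟩ = i then (1 : F) else 0)
  else C i (((J.1ᶜ).orderIsoOfFin (by simp [Finset.card_compl, J.2])).symm
    ⟨j, by simpa using h⟩)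

section Aux
variable {F : Type*} [Field F] {n r : ℕ} (J : {s : Finset (Fin n) // s.card = r})

/-- projection to the J-coordinates, in order -/
noncomputable def projJ : (Fin n → F) →ₗ[F] (Fin r → F) :=
  LinearMap.funLeft F F (fun i => ((J.1.orderIsoOfFin J.2) i : Fin n))

lemma liftPerm_apply_orderIso (C : Matrix (Fin r) (Fin (n - r)) F) (i i0 : Fin r) :
    liftPerm J C i ((J.1.orderIsoOfFin J.2) i0 : Fin n) = if i0 = i then 1 else 0 := by
  have h : ((J.1.orderIsoOfFin J.2) i0 : Fin n) ∈ J.1 := ((J.1.orderIsoOfFin J.2) i0).2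
  simp only [liftPerm, dif_pos h]
  have : (⟨((J.1.orderIsoOfFin J.2) i0 : Fin n), h⟩ : {x // x ∈ J.1}) =
      (J.1.orderIsoOfFin J.2) i0 := rfl
  rw [this, OrderIso.symm_apply_apply]

lemma projJ_liftPerm (C : Matrix (Fin r) (Fin (n - r)) F) (i : Fin r) :
    projJ J (liftPerm J C i) = Pi.single i 1 := by
  funext i0
  rw [show projJ J (liftPerm J C i) i0
      = liftPerm J C i ((J.1.orderIsoOfFin J.2) i0 : Fin n) from rfl,
    liftPerm_apply_orderIso]
  simp [Pi.single_apply]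

lemma liftPerm_li (C : Matrix (Fin r) (Fin (n - r)) F) :
    LinearIndependent F (liftPerm J C) := by
  apply LinearIndependent.of_comp (projJ J (F := F))
  have : (projJ J (F := F)) ∘ (liftPerm J C) = fun i => Pi.single i (1 : F) := by
    funext i; exact projJ_liftPerm J C i
  rw [this]
  have h := (Pi.basisFun F (Fin r)).linearIndependent
  have e : ⇑(Pi.basisFun F (Fin r)) = fun i => Pi.single i (1 : F) :=
    funext fun i => Pi.basisFun_apply F (Fin r) i
  rwa [e] at h

lemma finrank_rowSpace_liftPerm (C : Matrix (Fin r) (Fin (n - r)) F) :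
    Module.finrank F (rowSpace (liftPerm J C)) = r := by
  rw [rowSpace, finrank_span_eq_card (liftPerm_li J C)]
  simp

end Aux

section Aux2
variable {F : Type*} [Field F] {n r : ℕ} (J : {s : Finset (Fin n) // s.card = r})

/-- extend a vector indexed by `Fin (n-r)` by zero, into the complement positions of `J` -/
noncomputable def extZero : (Fin (n - r) → F) →ₗ[F] (Fin n → F) where
  toFun x := fun j =>
    if h : j ∈ J.1 then 0
    else x (((J.1ᶜ).orderIsoOfFin (by simp [Finset.card_compl, J.2])).symm
      ⟨j, by simpa using h⟩)
  map_add' x y := by funext j; by_cases h : j ∈ J.1 <;> simp [h]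
  map_smul' c x := by funext j; by_cases h : j ∈ J.1 <;> simp [h]

lemma liftPerm_sub (C D : Matrix (Fin r) (Fin (n - r)) F) (i : Fin r) :
    liftPerm J C i - liftPerm J D i = extZero J ((C - D) i) := by
  funext j
  by_cases h : j ∈ J.1 <;> simp [liftPerm, extZero, h, Matrix.sub_apply]

lemma finrank_span_extZero (D : Matrix (Fin r) (Fin (n - r)) F) :
    Module.finrank F (Submodule.span F (Set.range (fun i => extZero J (D i)))) ≤ rk D := by
  have : Submodule.span F (Set.range (fun i => extZero J (D i)))
      = Submodule.map (extZero J) (rowSpace D) := by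
    rw [rowSpace, Submodule.map_span, ← Set.range_comp (extZero J) D]
    rfl
  rw [this, rk]
  exact Submodule.finrank_map_le _ _

lemma dI_liftPerm_le (C D : Matrix (Fin r) (Fin (n - r)) F) :
    dI (rowSpace (liftPerm J C)) (rowSpace (liftPerm J D)) ≤ rk (C - D) := by
  set U := rowSpace (liftPerm J C)
  set W := rowSpace (liftPerm J D)
  set E := Submodule.span F (Set.range (fun i => extZero J (((C - D)) i)))
  have hsub : U ≤ W ⊔ E := by
    rw [show U = Submodule.span F (Set.range (liftPerm J C)) from rfl, Submodule.span_le]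
    rintro _ ⟨i, rfl⟩
    have : liftPerm J C i = liftPerm J D i + extZero J ((C - D) i) := by
      rw [← liftPerm_sub J C D i]; abel
    rw [this]
    exact Submodule.add_mem _
      (Submodule.mem_sup_left (Submodule.subset_span ⟨i, rfl⟩))
      (Submodule.mem_sup_right (Submodule.subset_span ⟨i, rfl⟩))
  have hUW : U ⊔ W ≤ W ⊔ E := sup_le hsub le_sup_left
  have h1 : Module.finrank F ↥(U ⊔ W) ≤ Module.finrank F ↥(W ⊔ E) :=
    Submodule.finrank_mono hUW
  have h2 : Module.finrank F ↥(W ⊔ E) ≤ Module.finrank F ↥W + Module.finrank F ↥E :=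
    Submodule.finrank_add_le_finrank_add_finrank W E
  have h3 : Module.finrank F ↥E ≤ rk (C - D) := finrank_span_extZero J (C - D)
  have hW : Module.finrank F ↥W = r := finrank_rowSpace_liftPerm J D
  have hU : Module.finrank F ↥U = r := finrank_rowSpace_liftPerm J C
  rw [dI, hU, hW, min_self]
  omega

end Aux2

section Exist
variable {F : Type*} [Field F] {n r : ℕ}

lemma mem_span_compl (J : {s : Finset (Fin n) // s.card = r}) (e : Set (Fin n → F))
    (he : ∀ j : Fin n, j ∉ J.1 → Pi.single j (1 : F) ∈ e)
    (x : Fin n → F) (hx : ∀ j ∈ J.1, x j = 0) : x ∈ Submodule.span F e := by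
  classical
  have hx' : x = ∑ j : Fin n, x j • (Pi.single j 1 : Fin n → F) := by
    funext j'
    rw [Finset.sum_apply]
    simp [Pi.single_apply]
  rw [hx']
  apply Submodule.sum_mem
  intro j _
  by_cases h : j ∈ J.1
  · rw [hx j h, zero_smul]; exact Submodule.zero_mem _
  · exact Submodule.smul_mem _ _ (Submodule.subset_span (he j h))

lemma exists_liftPerm_eq (hr : r ≤ n) (U : Submodule F (Fin n → F))
    (hU : Module.finrank F ↥U = r) :
    ∃ (J : {s : Finset (Fin n) // s.card = r}) (V : Matrix (Fin r) (Fin (n - r)) F),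
      U = rowSpace (liftPerm J V) := by
  classical
  -- a basis of U, viewed in the ambient space
  let bU : Module.Basis (Fin r) F ↥U := Module.finBasisOfFinrankEq F ↥U hU
  let v : Fin r → (Fin n → F) := fun i => (bU i : Fin n → F)
  have hv : LinearIndependent F v :=
    bU.linearIndependent.map' U.subtype (Submodule.ker_subtype U)
  set s : Set (Fin n → F) := Set.range v with hs_def
  have hs : LinearIndepOn F id s := (linearIndepOn_id_range_iff hv.injective).mpr hv
  set t : Set (Fin n → F) := s ∪ Set.range (fun j : Fin n => Pi.single j (1 : F)) with ht_def
  have ht : ⊤ ≤ Submodule.span F t := by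
    rw [← (Pi.basisFun F (Fin n)).span_eq]
    apply Submodule.span_mono
    intro x hx
    obtain ⟨j, rfl⟩ := Set.mem_range.mp hx
    right
    exact ⟨j, (Pi.basisFun_apply F (Fin n) j).symm⟩
  have hst : s ⊆ t := Set.subset_union_left
  let b : Module.Basis ↥(hs.extend hst) F (Fin n → F) := Module.Basis.extendLe hs hst ht
  set B : Set (Fin n → F) := hs.extend hst with hB_def
  have hsB : s ⊆ B := hs.subset_extend hst
  have hBt : B ⊆ t := hs.extend_subset hst
  haveI : Fintype ↥B := FiniteDimensional.fintypeBasisIndex b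
  have hBfin : B.Finite := B.toFinite
  have hcardB : B.ncard = n := by
    have h1 := Module.finrank_eq_card_basis b
    rw [Module.finrank_pi] at h1
    rw [Set.ncard_eq_toFinset_card', Set.toFinset_card]
    simpa using h1.symm
  have hvinj : Function.Injective v := hv.injective
  have hcards : s.ncard = r := by
    rw [hs_def, ← Set.image_univ, Set.ncard_image_of_injective _ hvinj]
    simp [Set.ncard_univ]
  set e : Set (Fin n → F) := B \ s with he_def
  have he_sub : e ⊆ Set.range (fun j : Fin n => Pi.single j (1 : F)) := by
    intro x hx
    rcases hBt hx.1 with h | h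
    · exact absurd h hx.2
    · exact h
  have hsinglinj : Function.Injective (fun j : Fin n => Pi.single j (1 : F)) := by
    have := (Pi.basisFun F (Fin n)).injective
    intro a b hab
    apply this
    rw [Pi.basisFun_apply, Pi.basisFun_apply]
    exact hab
  set K : Set (Fin n) := (fun j : Fin n => Pi.single j (1 : F)) ⁻¹' e with hK_def
  have hKe : (fun j : Fin n => Pi.single j (1 : F)) '' K = e := by
    apply Set.image_preimage_eq_of_subset he_sub
  have hcarde : e.ncard = n - r := by
    rw [he_def, Set.ncard_diff hsB (hBfin.subset hsB), hcardB, hcards]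
  have hcardK : K.ncard = n - r := by
    rw [← hcarde, ← hKe, Set.ncard_image_of_injective _ hsinglinj]
  -- the Finset of identity-column positions
  have hKf : K.toFinset.card = n - r := by
    rw [← Set.ncard_eq_toFinset_card']; exact hcardK
  have hJcard : (K.toFinsetᶜ : Finset (Fin n)).card = r := by
    rw [Finset.card_compl, hKf]
    simp only [Fintype.card_fin]
    omega
  set J : {s : Finset (Fin n) // s.card = r} := ⟨K.toFinsetᶜ, hJcard⟩ with hJ_def
  -- span facts
  have hUs : Submodule.span F s = U := by
    have h1 : U = Submodule.map U.subtype ⊤ := by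
      rw [Submodule.map_top, Submodule.range_subtype]
    rw [h1, ← bU.span_eq, Submodule.map_span, ← Set.range_comp]
    rfl
  set We : Submodule F (Fin n → F) := Submodule.span F e with hWe_def
  have hsupTop : U ⊔ We = ⊤ := by
    have hB_eq : B = s ∪ e := (Set.union_diff_cancel hsB).symm
    have hspanB : Submodule.span F B = ⊤ := by
      have h1 := (Module.Basis.extendLe hs hst ht).span_eq
      rwa [Module.Basis.range_extendLe hs hst ht] at h1
    rw [← hUs, ← Submodule.span_union, ← hB_eq, hspanB]
  haveI : Fintype ↥e := (hBfin.subset Set.diff_subset).fintype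
  have hWele : Module.finrank F ↥We ≤ n - r := by
    have := finrank_span_le_card (R := F) e
    rwa [← Set.ncard_eq_toFinset_card', hcarde] at this
  have hinf : U ⊓ We = ⊥ := by
    have hkey := Submodule.finrank_sup_add_finrank_inf_eq U We
    rw [hsupTop] at hkey
    have htop : Module.finrank F ↥(⊤ : Submodule F (Fin n → F)) = n := by
      rw [finrank_top, Module.finrank_pi]
      simp
    rw [← Submodule.finrank_eq_zero (R := F) (S := U ⊓ We)]
    omega
  -- membership of J-kernel vectors in We
  have hker : ∀ x : Fin n → F, (∀ j ∈ J.1, x j = 0) → x ∈ We := by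
    intro x hx
    apply mem_span_compl J e _ x hx
    intro j hj
    have : j ∈ K := by
      simpa [hJ_def, Set.mem_toFinset] using hj
    exact hKe ▸ Set.mem_image_of_mem _ this
  -- the restriction map U → F^r is bijective
  set φ : ↥U →ₗ[F] (Fin r → F) := (projJ J).comp U.subtype with hφ_def
  have hφinj : Function.Injective φ := by
    rw [← LinearMap.ker_eq_bot]
    rw [Submodule.eq_bot_iff]
    rintro ⟨u, hu⟩ hmem
    have hcoords : ∀ j ∈ J.1, u j = 0 := by
      intro j hj
      have h0 : φ ⟨u, hu⟩ ((J.1.orderIsoOfFin J.2).symm ⟨j, hj⟩) = 0 := by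
        rw [LinearMap.mem_ker.mp hmem]; rfl
      have : ((J.1.orderIsoOfFin J.2) ((J.1.orderIsoOfFin J.2).symm ⟨j, hj⟩) : Fin n) = j := by
        rw [OrderIso.apply_symm_apply]
      rw [show φ ⟨u, hu⟩ ((J.1.orderIsoOfFin J.2).symm ⟨j, hj⟩)
        = u ((J.1.orderIsoOfFin J.2) ((J.1.orderIsoOfFin J.2).symm ⟨j, hj⟩) : Fin n) from rfl,
        this] at h0
      exact h0
    have : u ∈ U ⊓ We := ⟨hu, hker u hcoords⟩
    rw [hinf] at this
    exact Subtype.ext this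
  have hφsurj : Function.Surjective φ :=
    (φ.linearEquivOfInjective hφinj (by rw [hU, Module.finrank_pi]; simp)).surjective
  -- the rows
  choose u hu using fun i : Fin r => hφsurj (Pi.single i (1 : F))
  have hcompl : (J.1ᶜ).card = n - r := by
    rw [Finset.card_compl, hJcard]
    simp
  let V : Matrix (Fin r) (Fin (n - r)) F := fun i k =>
    (u i : Fin n → F) (((J.1ᶜ).orderIsoOfFin hcompl) k : Fin n)
  have hrow : ∀ i : Fin r, liftPerm J V i = (u i : Fin n → F) := by
    intro i
    funext j
    by_cases h : j ∈ J.1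
    · have hval : (u i : Fin n → F) j
          = (Pi.single i 1 : Fin r → F) ((J.1.orderIsoOfFin J.2).symm ⟨j, h⟩) := by
        have happ := congrFun (hu i) ((J.1.orderIsoOfFin J.2).symm ⟨j, h⟩)
        rw [show φ (u i) ((J.1.orderIsoOfFin J.2).symm ⟨j, h⟩)
          = (u i : Fin n → F) ((J.1.orderIsoOfFin J.2) ((J.1.orderIsoOfFin J.2).symm ⟨j, h⟩) : Fin n)
          from rfl, show ((J.1.orderIsoOfFin J.2) ((J.1.orderIsoOfFin J.2).symm ⟨j, h⟩) : Fin n) = j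
          from by rw [OrderIso.apply_symm_apply]] at happ
        exact happ
      rw [hval]
      simp only [liftPerm, dif_pos h, Pi.single_apply]
    · simp only [liftPerm, dif_neg h]
      show V i _ = _
      simp only [V]
      rw [OrderIso.apply_symm_apply]
  refine ⟨J, V, ?_⟩
  have hle : rowSpace (liftPerm J V) ≤ U := by
    rw [rowSpace, Submodule.span_le]
    rintro _ ⟨i, rfl⟩
    rw [hrow i]
    exact (u i).2
  have hfr : Module.finrank F (rowSpace (liftPerm J V)) = r := finrank_rowSpace_liftPerm J V
  exact (Submodule.eq_of_le_of_finrank_le hle (by rw [hU, hfr])).symm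

end Exist

/-- Permuted liftings of a rank-metric covering code form a covering
constant-dimension code: every `r`-dimensional subspace is a permuted lifting, the code
`L(𝒞)` has injection covering radius at most `ρ`, and `|L(𝒞)| ≤ C(n,r)·|𝒞|`. -/
theorem permuted_lifting_covering (q n r ρ : ℕ) (F : Type*) [Field F] [Fintype F]
    (hq : Fintype.card F = q) (hr : r ≤ n)
    (𝒞 : Finset (Matrix (Fin r) (Fin (n - r)) F))
    (hcov : ∀ V : Matrix (Fin r) (Fin (n - r)) F, ∃ C ∈ 𝒞, rk (V - C) ≤ ρ) :
    (∀ U : Submodule F (Fin n → F), Module.finrank F ↥U = r →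
      ∃ (J : {s : Finset (Fin n) // s.card = r}) (V : Matrix (Fin r) (Fin (n - r)) F),
        U = rowSpace (liftPerm J V)) ∧
    (∀ U : Submodule F (Fin n → F), Module.finrank F ↥U = r →
      ∃ (J : {s : Finset (Fin n) // s.card = r}) (C : Matrix (Fin r) (Fin (n - r)) F),
        C ∈ 𝒞 ∧ dI U (rowSpace (liftPerm J C)) ≤ ρ) ∧
    Nat.card {W : Submodule F (Fin n → F) |
        ∃ (J : {s : Finset (Fin n) // s.card = r}) (C : Matrix (Fin r) (Fin (n - r)) F),
          C ∈ 𝒞 ∧ W = rowSpace (liftPerm J C)}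
      ≤ n.choose r * 𝒞.card := by
  refine ⟨fun U hU => exists_liftPerm_eq hr U hU, fun U hU => ?_, ?_⟩
  · obtain ⟨J, V, hUV⟩ := exists_liftPerm_eq hr U hU
    obtain ⟨C, hC, hrk⟩ := hcov V
    refine ⟨J, C, hC, ?_⟩
    rw [hUV]
    exact le_trans (dI_liftPerm_le J V C) hrk
  · set f : {s : Finset (Fin n) // s.card = r} × {C // C ∈ 𝒞} →
        Submodule F (Fin n → F) := fun p => rowSpace (liftPerm p.1 p.2.1) with hf_def
    have hSeq : {W : Submodule F (Fin n → F) |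
        ∃ (J : {s : Finset (Fin n) // s.card = r}) (C : Matrix (Fin r) (Fin (n - r)) F),
          C ∈ 𝒞 ∧ W = rowSpace (liftPerm J C)} = Set.range f := by
      ext W
      constructor
      · rintro ⟨J, C, hC, rfl⟩
        exact ⟨⟨J, ⟨C, hC⟩⟩, rfl⟩
      · rintro ⟨⟨J, C⟩, rfl⟩
        exact ⟨J, C.1, C.2, rfl⟩
    rw [hSeq]
    calc Nat.card (Set.range f) ≤ Nat.card ({s : Finset (Fin n) // s.card = r} × {C // C ∈ 𝒞}) :=
          Finite.card_range_le f
      _ = n.choose r * 𝒞.card := by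
          rw [Nat.card_prod, Nat.card_eq_fintype_card, Nat.card_eq_fintype_card,
            Fintype.card_finset_len, Fintype.card_coe]
          simp
end

section
/- Probabilistic upper bound on covering CDCs: let Q = [n choose r]_q and let V_C(ρ) be the ball volume in the injection metric on r-dimensional subspaces of GF(q)^n with 0 < ρ < r and V_C(ρ) < Q. Then there exists a set 𝒞 of r-dimensional subspaces with covering radius at most ρ and |𝒞| ≤ ⌊-1/log_Q(1 - V_C(ρ)/Q)⌋ + 1; in particular the minimum cardinality K_C(q,n,r,ρ) of a covering code satisfies K_C(q,n,r,ρ) ≤ 1/(1 - log_Q(Q - V_C(ρ))) + 1. -/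
/-- The minimum cardinality `K_C(q,n,r,ρ)` of a constant-dimension code in `E_r(q,n)`
with injection covering radius at most `ρ`. -/
noncomputable def KC (F : Type*) [Field F] [Fintype F] (n r ρ : ℕ) : ℕ :=
  sInf {k : ℕ | ∃ 𝒞 : Finset (Submodule F (Fin n → F)),
    (∀ C ∈ 𝒞, Module.finrank F ↥C = r) ∧
    (∀ U : Submodule F (Fin n → F), Module.finrank F ↥U = r → ∃ C ∈ 𝒞, dI U C ≤ ρ) ∧
    𝒞.card = k}

namespace CDC

open Finset

noncomputable def gp (x : ℝ) (a : ℕ) : ℝ := ∏ j ∈ range a, (x ^ (j+1) - 1)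

lemma gp_zero (x : ℝ) : gp x 0 = 1 := by simp [gp]

lemma prodA (x : ℝ) : ∀ d m : ℕ, d ≤ m →
    (∏ i ∈ range d, (x ^ m - x ^ i)) * gp x (m - d)
      = (∏ i ∈ range d, x ^ i) * gp x m := by
  intro d
  induction d with
  | zero => intro m _; simp [Nat.sub_zero]
  | succ d ih =>
    intro m hm
    have hdm : d ≤ m := Nat.le_of_succ_le hm
    obtain ⟨k, hk⟩ : ∃ k, m - d = k + 1 := ⟨m - (d+1), by omega⟩
    have hk' : m - (d+1) = k := by omega
    have h2 : gp x (m - d) = gp x k * (x ^ (m - d) - 1) := by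
      rw [hk, gp, prod_range_succ, ← gp, ← hk]
    have h3 : x ^ m - x ^ d = x ^ d * (x ^ (m - d) - 1) := by
      rw [mul_sub, mul_one, ← pow_add, Nat.add_sub_cancel' hdm]
    have hih := ih m hdm
    rw [h2] at hih
    rw [prod_range_succ, prod_range_succ, hk', h3]
    linear_combination x ^ d * hih

lemma gp_ne_zero {x : ℝ} (hx : 2 ≤ x) (a : ℕ) : gp x a ≠ 0 := by
  apply prod_ne_zero_iff.2
  intro j _
  have : (1:ℝ) < x ^ (j+1) := one_lt_pow₀ (by linarith) (by omega)
  linarith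

lemma pow_sub_pow_pos {x : ℝ} (hx : 2 ≤ x) {i k : ℕ} (h : i < k) :
    0 < x ^ k - x ^ i := by
  have := pow_lt_pow_right₀ (by linarith : (1:ℝ) < x) h
  linarith

lemma prod_pow_sub_ne_zero {x : ℝ} (hx : 2 ≤ x) (k : ℕ) :
    ∏ i ∈ range k, (x ^ k - x ^ i) ≠ 0 := by
  apply prod_ne_zero_iff.2
  intro i hi
  exact ne_of_gt (pow_sub_pow_pos hx (mem_range.mp hi))

lemma gaussBinom_eq_div {q n r : ℕ} :
    gaussBinom q n r = (∏ i ∈ range r, ((q:ℝ) ^ n - (q:ℝ) ^ i)) /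
      (∏ i ∈ range r, ((q:ℝ) ^ r - (q:ℝ) ^ i)) := by
  rw [gaussBinom, prod_div_distrib]

lemma gaussBinom_symm {q m d : ℕ} (hq : 2 ≤ q) (hd : d ≤ m) :
    gaussBinom q m (m - d) = gaussBinom q m d := by
  have hx : (2:ℝ) ≤ (q:ℝ) := by exact_mod_cast hq
  set x := (q:ℝ)
  rw [gaussBinom_eq_div, gaussBinom_eq_div]
  rw [div_eq_div_iff (prod_pow_sub_ne_zero hx _) (prod_pow_sub_ne_zero hx _)]
  have hA1 := prodA x (m-d) m (Nat.sub_le m d)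
  have hA2 := prodA x d m hd
  have hA3 := prodA x d d le_rfl
  have hA4 := prodA x (m-d) (m-d) le_rfl
  rw [Nat.sub_sub_self hd] at hA1
  rw [Nat.sub_self, gp_zero, mul_one] at hA3 hA4
  have hgd : gp x d ≠ 0 := gp_ne_zero hx d
  have hgmd : gp x (m-d) ≠ 0 := gp_ne_zero hx (m-d)
  apply mul_right_cancel₀ (mul_ne_zero hgd hgmd)
  linear_combination ((∏ i ∈ range d, (x ^ d - x ^ i)) * gp x (m-d)) * hA1
    + ((∏ i ∈ range (m-d), x ^ i) * gp x m * gp x (m-d)) * hA3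
    - ((∏ i ∈ range (m-d), (x ^ (m-d) - x ^ i)) * gp x d) * hA2
    - ((∏ i ∈ range d, x ^ i) * gp x m * gp x d) * hA4

lemma gaussBinom_pos {q m d : ℕ} (hq : 2 ≤ q) (hd : d ≤ m) : 0 < gaussBinom q m d := by
  have hx : (2:ℝ) ≤ (q:ℝ) := by exact_mod_cast hq
  apply prod_pos
  intro i hi
  have hi' := mem_range.mp hi
  exact div_pos (pow_sub_pow_pos hx (lt_of_lt_of_le hi' hd)) (pow_sub_pow_pos hx hi')

lemma gaussBinom_zero' (q m : ℕ) : gaussBinom q m 0 = 1 := by simp [gaussBinom]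

lemma gaussBinom_eq_zero {q m d : ℕ} (hq : 2 ≤ q) (hd : m < d) : gaussBinom q m d = 0 := by
  rw [gaussBinom]
  apply prod_eq_zero (mem_range.mpr hd)
  simp

lemma gaussBinom_nonneg {q m d : ℕ} (hq : 2 ≤ q) : 0 ≤ gaussBinom q m d := by
  rcases le_or_gt d m with h | h
  · exact le_of_lt (gaussBinom_pos hq h)
  · rw [gaussBinom_eq_zero hq h]


open Finset Module Submodule

variable {F V : Type*} [Field F] [Fintype F] [AddCommGroup V] [Module F V] [Finite V]

instance : Finite (Submodule F V) :=
  Finite.of_injective (fun W => (W : Set V)) SetLike.coe_injective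

/-- fiber of the span map over a `d`-dimensional subspace `W` -/
noncomputable def fiberEquiv (d : ℕ) (W : Submodule F V) (hW : finrank F ↥W = d) :
    {s : {s : Fin d → V // LinearIndependent F s} //
        Submodule.span F (Set.range s.1) = W} ≃
      {t : Fin d → ↥W // LinearIndependent F t} where
  toFun s := ⟨fun i => ⟨s.1.1 i, by
      have : s.1.1 i ∈ Submodule.span F (Set.range s.1.1) :=
        Submodule.subset_span (Set.mem_range_self i)
      rwa [s.2] at this⟩, by
    apply LinearIndependent.of_comp W.subtype
    exact s.1.2⟩
  invFun t := ⟨⟨(W.subtype ∘ t.1 : Fin d → V),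
      t.2.map' W.subtype (Submodule.ker_subtype W)⟩, by
    have hle : Submodule.span F (Set.range (W.subtype ∘ t.1 : Fin d → V)) ≤ W := by
      rw [Submodule.span_le]
      rintro x ⟨i, rfl⟩
      exact (t.1 i).2
    apply Submodule.eq_of_le_of_finrank_eq hle
    rw [finrank_span_eq_card (t.2.map' W.subtype (Submodule.ker_subtype W))]
    simp [hW]⟩
  left_inv s := Subtype.ext (Subtype.ext rfl)
  right_inv t := Subtype.ext (funext fun i => Subtype.ext rfl)

theorem subspace_count {d : ℕ} (hd : d ≤ finrank F V) :
    Nat.card {W : Submodule F V // finrank F ↥W = d} *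
        ∏ i ∈ range d, (Fintype.card F ^ d - Fintype.card F ^ i)
      = ∏ i ∈ range d, (Fintype.card F ^ finrank F V - Fintype.card F ^ i) := by
  classical
  cases nonempty_fintype V
  set q := Fintype.card F
  have hcard : Nat.card {s : Fin d → V // LinearIndependent F s}
      = ∏ i ∈ range d, (q ^ finrank F V - q ^ i) := by
    rw [card_linearIndependent hd]
    exact Fin.prod_univ_eq_prod_range (fun i => q ^ finrank F V - q ^ i) d
  -- span map
  letI : Fintype {s : Fin d → V // LinearIndependent F s} := Fintype.ofFinite _
  letI : Fintype {W : Submodule F V // finrank F ↥W = d} := Fintype.ofFinite _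
  set π : {s : Fin d → V // LinearIndependent F s} →
      {W : Submodule F V // finrank F ↥W = d} :=
    fun s => ⟨Submodule.span F (Set.range s.1), by
      rw [finrank_span_eq_card s.2]; simp⟩ with hπ
  have hfib : ∀ W : {W : Submodule F V // finrank F ↥W = d},
      (univ.filter fun s => π s = W).card = ∏ i ∈ range d, (q ^ d - q ^ i) := by
    intro W
    have e1 : (univ.filter fun s => π s = W).card
        = Fintype.card {s : {s : Fin d → V // LinearIndependent F s} // π s = W} := by
      rw [Fintype.card_subtype]
    have e2 : {s : {s : Fin d → V // LinearIndependent F s} // π s = W}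
        ≃ {s : {s : Fin d → V // LinearIndependent F s} //
            Submodule.span F (Set.range s.1) = W.1} :=
      Equiv.subtypeEquivRight (fun s => by
        constructor
        · intro h; rw [← h]
        · intro h; exact Subtype.ext h)
    have e3 := fiberEquiv (F := F) (V := V) d W.1 W.2
    have := card_linearIndependent (K := F) (V := ↥W.1) (k := d) (by rw [W.2])
    rw [e1, ← Nat.card_eq_fintype_card, Nat.card_congr (e2.trans e3), this, W.2]
    exact Fin.prod_univ_eq_prod_range (fun i => q ^ d - q ^ i) d
  have hsum : Nat.card {s : Fin d → V // LinearIndependent F s}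
      = ∑ b : {W : Submodule F V // finrank F ↥W = d},
          (univ.filter fun a => π a = b).card := by
    rw [Nat.card_eq_fintype_card, ← card_univ]
    exact Finset.card_eq_sum_card_fiberwise (fun x _ => mem_univ _)
  rw [← hcard, hsum, Finset.sum_congr rfl (fun W _ => hfib W), sum_const, card_univ,
    ← Nat.card_eq_fintype_card, smul_eq_mul]




open Finset Module Submodule
variable {F V : Type*} [Field F] [Fintype F] [AddCommGroup V] [Module F V] [Finite V]

lemma cast_prod_pow_sub {q : ℕ} (hq : 2 ≤ q) {d k : ℕ} (hd : d ≤ k) :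
    ((∏ i ∈ range d, (q ^ k - q ^ i) : ℕ) : ℝ)
      = ∏ i ∈ range d, ((q:ℝ) ^ k - (q:ℝ) ^ i) := by
  rw [Nat.cast_prod]
  apply prod_congr rfl
  intro i hi
  have : q ^ i ≤ q ^ k :=
    Nat.pow_le_pow_right (by omega) (le_trans (le_of_lt (mem_range.mp hi)) hd)
  push_cast [Nat.cast_sub this]
  ring

theorem subspace_count_real (hq2 : 2 ≤ Fintype.card F) {d : ℕ} (hd : d ≤ finrank F V) :
    (Nat.card {W : Submodule F V // finrank F ↥W = d} : ℝ)
      = gaussBinom (Fintype.card F) (finrank F V) d := by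
  set q := Fintype.card F
  have h := congrArg (fun k : ℕ => (k : ℝ)) (subspace_count (F := F) (V := V) hd)
  simp only [Nat.cast_mul] at h
  rw [cast_prod_pow_sub hq2 le_rfl, cast_prod_pow_sub hq2 hd] at h
  rw [gaussBinom_eq_div, eq_div_iff (prod_pow_sub_ne_zero (by exact_mod_cast hq2) d)]
  exact h

lemma finite_linearMap {M N : Type*} [AddCommGroup M] [Module F M] [Finite M]
    [AddCommGroup N] [Module F N] [Finite N] : Finite (M →ₗ[F] N) :=
  Finite.of_injective (fun f => (f : M → N)) DFunLike.coe_injective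

theorem card_linearMap {M N : Type*} [AddCommGroup M] [Module F M] [Finite M]
    [AddCommGroup N] [Module F N] [Finite N] :
    Nat.card (M →ₗ[F] N) = Fintype.card F ^ (finrank F M * finrank F N) := by
  have : Finite (M →ₗ[F] N) := finite_linearMap
  cases nonempty_fintype (M →ₗ[F] N)
  rw [Nat.card_eq_fintype_card, card_eq_pow_finrank (K := F), finrank_linearMap]


section Ball



variable {F V : Type*} [Field F] [Fintype F] [AddCommGroup V] [Module F V] [Finite V]

/-- A choice of complement of a subspace. -/
noncomputable def compl' (W : Submodule F V) : Submodule F V :=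
  Classical.choose W.exists_isCompl

lemma compl'_isCompl (W : Submodule F V) : IsCompl W (compl' W) :=
  Classical.choose_spec W.exists_isCompl

variable (C C' : Submodule F V)

/-- The linear map `b ↦ b + φ b` used to build subspaces near `C`. -/
noncomputable def lmap (A : Submodule F ↥C) (B : Submodule F ↥C')
    (φ : ↥B →ₗ[F] ↥(compl' A)) : ↥B →ₗ[F] V :=
  (C'.subtype.comp B.subtype) + ((C.subtype.comp (compl' A).subtype).comp φ)

/-- The subspace associated to the data `(A, B, φ)`. -/
noncomputable def mkU (A : Submodule F ↥C) (B : Submodule F ↥C')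
    (φ : ↥B →ₗ[F] ↥(compl' A)) : Submodule F V :=
  (A.map C.subtype) ⊔ LinearMap.range (lmap C C' A B φ)

variable {C C'}

lemma lmap_apply (A : Submodule F ↥C) (B : Submodule F ↥C')
    (φ : ↥B →ₗ[F] ↥(compl' A)) (b : ↥B) :
    lmap C C' A B φ b = ((b : ↥C') : V) + (((φ b : ↥(compl' A)) : ↥C) : V) := rfl

variable (hCC' : IsCompl C C') (A : Submodule F ↥C) (B : Submodule F ↥C')
    (φ : ↥B →ₗ[F] ↥(compl' A))

include hCC'

lemma mkU_inf : mkU C C' A B φ ⊓ C = A.map C.subtype := by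
  apply le_antisymm
  · intro x hx
    rw [Submodule.mem_inf] at hx
    obtain ⟨hxU, hxC⟩ := hx
    rw [mkU, Submodule.mem_sup] at hxU
    obtain ⟨a, ha, z, hz, rfl⟩ := hxU
    obtain ⟨b, rfl⟩ := hz
    have haC : a ∈ C := Submodule.map_subtype_le C A ha
    have hφC : (((φ b : ↥(compl' A)) : ↥C) : V) ∈ C := ((φ b : ↥(compl' A)) : ↥C).2
    have hbC : ((b : ↥C') : V) ∈ C := by
      have : ((b : ↥C') : V) = (a + lmap C C' A B φ b) - a - (((φ b : ↥(compl' A)) : ↥C) : V) := by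
        rw [lmap_apply]; abel
      rw [this]
      exact Submodule.sub_mem _ (Submodule.sub_mem _ hxC haC) hφC
    have hbC' : ((b : ↥C') : V) ∈ C' := (b : ↥C').2
    have hb0 : ((b : ↥C') : V) = 0 := Submodule.disjoint_def.mp hCC'.disjoint _ hbC hbC'
    have hb : b = 0 := by
      apply Subtype.coe_injective
      apply Subtype.coe_injective
      simpa using hb0
    rw [hb, map_zero, add_zero]
    exact ha
  · exact le_inf (by rw [mkU]; exact le_sup_left) (Submodule.map_subtype_le C A)

lemma mkU_sup : mkU C C' A B φ ⊔ C = C ⊔ B.map C'.subtype := by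
  apply le_antisymm
  · apply sup_le _ le_sup_left
    rw [mkU]
    apply sup_le
    · exact le_trans (Submodule.map_subtype_le C A) le_sup_left
    · rintro x ⟨b, rfl⟩
      rw [lmap_apply]
      apply Submodule.add_mem
      · exact Submodule.mem_sup_right (Submodule.mem_map_of_mem b.2)
      · exact Submodule.mem_sup_left ((φ b : ↥(compl' A)) : ↥C).2
  · apply sup_le le_sup_right
    rintro x ⟨b0, hb0, rfl⟩
    have hmem : lmap C C' A B φ ⟨b0, hb0⟩ ∈ mkU C C' A B φ := by
      rw [mkU]
      exact Submodule.mem_sup_right (LinearMap.mem_range_self _ _)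
    have heq : (b0 : V) = lmap C C' A B φ ⟨b0, hb0⟩
        - ((φ ⟨b0, hb0⟩ : ↥(compl' A)) : ↥C) := by
      rw [lmap_apply]
      push_cast
      abel
    show (b0 : V) ∈ mkU C C' A B φ ⊔ C
    rw [heq]
    exact Submodule.sub_mem _ (Submodule.mem_sup_left hmem)
      (Submodule.mem_sup_right ((φ ⟨b0, hb0⟩ : ↥(compl' A)) : ↥C).2)

lemma lmap_injective : Function.Injective (lmap C C' A B φ) := by
  rw [← LinearMap.ker_eq_bot, LinearMap.ker_eq_bot']
  intro b hb
  rw [lmap_apply] at hb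
  have hbC : ((b : ↥C') : V) ∈ C := by
    have : ((b : ↥C') : V) = -(((φ b : ↥(compl' A)) : ↥C) : V) :=
      eq_neg_of_add_eq_zero_left hb
    rw [this]
    exact Submodule.neg_mem _ ((φ b : ↥(compl' A)) : ↥C).2
  have hb0 : ((b : ↥C') : V) = 0 :=
    Submodule.disjoint_def.mp hCC'.disjoint _ hbC (b : ↥C').2
  apply Subtype.coe_injective
  apply Subtype.coe_injective
  simpa using hb0

lemma mkU_finrank : finrank F ↥(mkU C C' A B φ) = finrank F ↥A + finrank F ↥B := by
  have hdisj : Disjoint (A.map C.subtype) (LinearMap.range (lmap C C' A B φ)) := by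
    rw [Submodule.disjoint_def]
    intro x hxA hxR
    obtain ⟨b, rfl⟩ := hxR
    have hbC : ((b : ↥C') : V) ∈ C := by
      have : ((b : ↥C') : V) = lmap C C' A B φ b - (((φ b : ↥(compl' A)) : ↥C) : V) := by
        rw [lmap_apply]; abel
      rw [this]
      exact Submodule.sub_mem _ (Submodule.map_subtype_le C A hxA) ((φ b : ↥(compl' A)) : ↥C).2
    have hb0 : ((b : ↥C') : V) = 0 :=
      Submodule.disjoint_def.mp hCC'.disjoint _ hbC (b : ↥C').2
    have hb : b = 0 := by
      apply Subtype.coe_injective; apply Subtype.coe_injective; simpa using hb0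
    rw [hb, map_zero]
  have := Submodule.finrank_sup_add_finrank_inf_eq (A.map C.subtype)
    (LinearMap.range (lmap C C' A B φ))
  rw [hdisj.eq_bot, finrank_bot, add_zero] at this
  rw [mkU, this, Submodule.finrank_map_subtype_eq,
    LinearMap.finrank_range_of_inj (lmap_injective hCC' A B φ)]

lemma mkU_map_proj :
    Submodule.map (C'.linearProjOfIsCompl C hCC'.symm) (mkU C C' A B φ) = B := by
  set π := C'.linearProjOfIsCompl C hCC'.symm with hπ
  apply le_antisymm
  · intro x hx
    rw [Submodule.mem_map] at hx
    obtain ⟨u, hu, rfl⟩ := hx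
    rw [mkU, Submodule.mem_sup] at hu
    obtain ⟨a, ha, z, hz, rfl⟩ := hu
    obtain ⟨b, rfl⟩ := hz
    have h1 : π a = 0 :=
      Submodule.projectionOnto_apply_of_mem_right hCC'.symm (Submodule.map_subtype_le C A ha)
    have h2 : π (((φ b : ↥(compl' A)) : ↥C) : V) = 0 :=
      Submodule.projectionOnto_apply_of_mem_right hCC'.symm ((φ b : ↥(compl' A)) : ↥C).2
    have h3 : π ((b : ↥C') : V) = (b : ↥C') :=
      Submodule.linearProjOfIsCompl_apply_left hCC'.symm (b : ↥C')
    rw [lmap_apply, map_add, map_add, h1, h2, h3, zero_add, add_zero]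
    exact b.2
  · intro y hy
    refine ⟨lmap C C' A B φ ⟨y, hy⟩, ?_, ?_⟩
    · rw [mkU]; exact Submodule.mem_sup_right (LinearMap.mem_range_self _ _)
    · rw [lmap_apply, map_add,
        (show π _ = 0 from Submodule.projectionOnto_apply_of_mem_right hCC'.symm
          ((φ ⟨y, hy⟩ : ↥(compl' A)) : ↥C).2), add_zero]
      exact Submodule.linearProjOfIsCompl_apply_left hCC'.symm y

lemma mkU_injective_phi (φ₁ φ₂ : ↥B →ₗ[F] ↥(compl' A))
    (h : mkU C C' A B φ₁ = mkU C C' A B φ₂) : φ₁ = φ₂ := by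
  set π := C'.linearProjOfIsCompl C hCC'.symm with hπ
  apply LinearMap.ext
  intro b
  have hm : lmap C C' A B φ₁ b ∈ mkU C C' A B φ₂ := by
    rw [← h, mkU]
    exact Submodule.mem_sup_right (LinearMap.mem_range_self _ _)
  rw [mkU, Submodule.mem_sup] at hm
  obtain ⟨a, ha, z, hz, heq⟩ := hm
  obtain ⟨b', rfl⟩ := hz
  have h1 : π a = 0 :=
    Submodule.projectionOnto_apply_of_mem_right hCC'.symm (Submodule.map_subtype_le C A ha)
  have h2 : ∀ (ψ : ↥B →ₗ[F] ↥(compl' A)) (c : ↥B), π (lmap C C' A B ψ c) = (c : ↥C') := by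
    intro ψ c
    rw [lmap_apply, map_add,
      (show π _ = 0 from Submodule.projectionOnto_apply_of_mem_right hCC'.symm
        ((ψ c : ↥(compl' A)) : ↥C).2), add_zero]
    exact Submodule.linearProjOfIsCompl_apply_left hCC'.symm _
  have hbb : b' = b := by
    have := congrArg π heq
    rw [map_add, h1, zero_add, h2, h2] at this
    exact Subtype.coe_injective this
  subst hbb
  have heq2 : a = (((φ₁ b' : ↥(compl' A)) : ↥C) : V)
      - (((φ₂ b' : ↥(compl' A)) : ↥C) : V) := by
    rw [lmap_apply, lmap_apply] at heq
    have := eq_sub_of_add_eq heq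
    rw [this]
    abel
  have hsub : (((φ₁ b' - φ₂ b' : ↥(compl' A)) : ↥C) : V)
      = (((φ₁ b' : ↥(compl' A)) : ↥C) : V) - (((φ₂ b' : ↥(compl' A)) : ↥C) : V) := by
    norm_cast
  have hmemD : (((φ₁ b' - φ₂ b' : ↥(compl' A)) : ↥C) : V)
      ∈ Submodule.map C.subtype (compl' A) :=
    Submodule.mem_map_of_mem (φ₁ b' - φ₂ b').2
  have hmemA : (((φ₁ b' - φ₂ b' : ↥(compl' A)) : ↥C) : V)
      ∈ Submodule.map C.subtype A := by
    rw [hsub, ← heq2]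
    exact ha
  have hzero : (((φ₁ b' - φ₂ b' : ↥(compl' A)) : ↥C) : V) = 0 := by
    obtain ⟨a₀, ha₀, hcoe⟩ := hmemA
    obtain ⟨d₀, hd₀, hcoe'⟩ := hmemD
    have had : a₀ = d₀ := Submodule.injective_subtype C (by rw [hcoe, hcoe'])
    subst had
    have : a₀ ∈ A ⊓ compl' A := ⟨ha₀, hd₀⟩
    rw [(compl'_isCompl A).inf_eq_bot] at this
    rw [← hcoe, this]
    rfl
  have : φ₁ b' - φ₂ b' = 0 := by
    apply Subtype.coe_injective
    apply Subtype.coe_injective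
    simpa using hzero
  rw [← sub_eq_zero]
  exact this

lemma mkU_sup_finrank {r d : ℕ} (hB : finrank F ↥B = d) (hC : finrank F ↥C = r) :
    finrank F ↥(mkU C C' A B φ ⊔ C) = r + d := by
  rw [mkU_sup hCC']
  have hdisj : Disjoint C (Submodule.map C'.subtype B) := by
    rw [Submodule.disjoint_def]
    intro x hxC hxB
    obtain ⟨b0, hb0, rfl⟩ := hxB
    exact Submodule.disjoint_def.mp hCC'.disjoint _ hxC b0.2
  have hfr := Submodule.finrank_sup_add_finrank_inf_eq C (Submodule.map C'.subtype B)
  rw [hdisj.eq_bot, finrank_bot, add_zero] at hfr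
  rw [hfr, Submodule.finrank_map_subtype_eq, hB, hC]

end Ball

section BallCount

variable {F V : Type*} [Field F] [Fintype F] [AddCommGroup V] [Module F V] [Finite V]

theorem stratum_count (hq2 : 2 ≤ Fintype.card F) {r d : ℕ} (C : Submodule F V)
    (hC : finrank F ↥C = r) (hd : d ≤ r) (hdn : d + r ≤ finrank F V) :
    (Fintype.card F : ℝ) ^ (d ^ 2) * gaussBinom (Fintype.card F) r d
        * gaussBinom (Fintype.card F) (finrank F V - r) d
      ≤ (Nat.card {U : Submodule F V //
          finrank F ↥U = r ∧ finrank F ↥(U ⊔ C) = r + d} : ℝ) := by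
  classical
  set q := Fintype.card F with hqdef
  have hCC' := compl'_isCompl C
  set C' := compl' C with hC'def
  have hC' : finrank F ↥C' = finrank F V - r := by
    have h := Submodule.finrank_add_eq_of_isCompl hCC'
    omega
  set Γ := Σ (A : {A : Submodule F ↥C // finrank F ↥A = r - d}),
    Σ (B : {B : Submodule F ↥C' // finrank F ↥B = d}),
      (↥B.1 →ₗ[F] ↥(compl' A.1)) with hΓ
  have hDfin : ∀ A : {A : Submodule F ↥C // finrank F ↥A = r - d},
      finrank F ↥(compl' A.1) = d := by
    intro A
    have h := Submodule.finrank_add_eq_of_isCompl (compl'_isCompl A.1)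
    rw [A.2, hC] at h
    omega
  have hΦ : ∀ γ : Γ, finrank F ↥(mkU C C' γ.1.1 γ.2.1.1 γ.2.2) = r ∧
      finrank F ↥(mkU C C' γ.1.1 γ.2.1.1 γ.2.2 ⊔ C) = r + d := by
    rintro ⟨A, B, φ⟩
    constructor
    · rw [mkU_finrank hCC', A.2, B.2]
      omega
    · exact mkU_sup_finrank hCC' _ _ _ B.2 hC
  set Φ : Γ → {U : Submodule F V //
      finrank F ↥U = r ∧ finrank F ↥(U ⊔ C) = r + d} :=
    fun γ => ⟨mkU C C' γ.1.1 γ.2.1.1 γ.2.2, hΦ γ⟩ with hΦdef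
  have hinj : Function.Injective Φ := by
    rintro ⟨A₁, B₁, φ₁⟩ ⟨A₂, B₂, φ₂⟩ h
    have h' : mkU C C' A₁.1 B₁.1 φ₁ = mkU C C' A₂.1 B₂.1 φ₂ := congrArg Subtype.val h
    obtain rfl : A₁ = A₂ := by
      apply Subtype.ext
      apply Submodule.map_injective_of_injective (Submodule.injective_subtype C)
      rw [← mkU_inf hCC' A₁.1 B₁.1 φ₁, ← mkU_inf hCC' A₂.1 B₂.1 φ₂, h']
    obtain rfl : B₁ = B₂ := by
      apply Subtype.ext
      rw [← mkU_map_proj hCC' A₁.1 B₁.1 φ₁, ← mkU_map_proj hCC' A₁.1 B₂.1 φ₂, h']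
    rw [mkU_injective_phi hCC' A₁.1 B₁.1 φ₁ φ₂ h']
  have hle : Nat.card Γ ≤ Nat.card {U : Submodule F V //
      finrank F ↥U = r ∧ finrank F ↥(U ⊔ C) = r + d} :=
    Nat.card_le_card_of_injective Φ hinj
  -- compute card of Γ
  letI : Fintype {A : Submodule F ↥C // finrank F ↥A = r - d} := Fintype.ofFinite _
  letI : Fintype {B : Submodule F ↥C' // finrank F ↥B = d} := Fintype.ofFinite _
  letI : ∀ (A₀ : Submodule F ↥C) (B₀ : Submodule F ↥C'),
      Fintype (↥B₀ →ₗ[F] ↥(compl' A₀)) := fun A₀ B₀ =>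
    @Fintype.ofFinite _ (finite_linearMap (F := F))
  have hΓcard : (Nat.card Γ : ℝ)
      = (Nat.card {A : Submodule F ↥C // finrank F ↥A = r - d} : ℝ)
        * ((Nat.card {B : Submodule F ↥C' // finrank F ↥B = d} : ℝ) * (q : ℝ) ^ (d * d)) := by
    have h1 : ∀ (A : {A : Submodule F ↥C // finrank F ↥A = r - d})
        (B : {B : Submodule F ↥C' // finrank F ↥B = d}),
        Fintype.card (↥B.1 →ₗ[F] ↥(compl' A.1)) = q ^ (d * d) := by
      intro A B
      rw [← Nat.card_eq_fintype_card, card_linearMap, B.2, hDfin A]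
    rw [Nat.card_eq_fintype_card, Fintype.card_sigma]
    rw [Finset.sum_congr rfl (fun A _ => by
      rw [Fintype.card_sigma, Finset.sum_congr rfl (fun B _ => h1 A B),
        Finset.sum_const, Finset.card_univ, smul_eq_mul])]
    rw [Finset.sum_const, Finset.card_univ, smul_eq_mul]
    push_cast [Nat.card_eq_fintype_card]
    ring
  have hA : (Nat.card {A : Submodule F ↥C // finrank F ↥A = r - d} : ℝ)
      = gaussBinom q r d := by
    have h := subspace_count_real (F := F) (V := ↥C) hq2
      (d := r - d) (by rw [hC]; omega)
    rw [hC] at h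
    rw [h, gaussBinom_symm hq2 hd]
  have hB : (Nat.card {B : Submodule F ↥C' // finrank F ↥B = d} : ℝ)
      = gaussBinom q (finrank F V - r) d := by
    have h := subspace_count_real (F := F) (V := ↥C') hq2
      (d := d) (by rw [hC']; omega)
    rw [hC'] at h
    exact h
  calc (q : ℝ) ^ (d ^ 2) * gaussBinom q r d * gaussBinom q (finrank F V - r) d
      = (Nat.card Γ : ℝ) := by
        rw [hΓcard, hA, hB, pow_two]
        ring
    _ ≤ (Nat.card {U : Submodule F V //
          finrank F ↥U = r ∧ finrank F ↥(U ⊔ C) = r + d} : ℝ) := by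
        exact_mod_cast hle

lemma dI_comm {F W : Type*} [Field F] [AddCommGroup W] [Module F W]
    (U V : Submodule F W) : dI U V = dI V U := by
  rw [dI, dI, sup_comm, min_comm]

theorem ball_count (hq2 : 2 ≤ Fintype.card F) {r ρ : ℕ} (C : Submodule F V)
    (hC : finrank F ↥C = r) (hρr : ρ < r) :
    ballVol (Fintype.card F) (finrank F V) r ρ
      ≤ (Nat.card {U : Submodule F V // finrank F ↥U = r ∧ dI U C ≤ ρ} : ℝ) := by
  classical
  set q := Fintype.card F with hqdef
  set n' := finrank F V with hn'
  letI : ∀ d : ℕ, Fintype {U : Submodule F V //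
      finrank F ↥U = r ∧ finrank F ↥(U ⊔ C) = r + d} := fun d => Fintype.ofFinite _
  set T : Fin (ρ+1) → Type _ := fun d => {U : Submodule F V //
      finrank F ↥U = r ∧ finrank F ↥(U ⊔ C) = r + (d : ℕ)} with hT
  have hdI : ∀ (U : Submodule F V) (d : ℕ), finrank F ↥U = r →
      finrank F ↥(U ⊔ C) = r + d → dI U C = d := by
    intro U d h1 h2
    rw [dI, h1, hC, min_self, h2]
    omega
  have hΨ : ∀ γ : Σ d : Fin (ρ+1), T d,
      finrank F ↥(γ.2.1) = r ∧ dI γ.2.1 C ≤ ρ := by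
    rintro ⟨d, U, h1, h2⟩
    refine ⟨h1, ?_⟩
    rw [hdI U d h1 h2]
    omega
  set Ψ : (Σ d : Fin (ρ+1), T d) → {U : Submodule F V // finrank F ↥U = r ∧ dI U C ≤ ρ} :=
    fun γ => ⟨γ.2.1, hΨ γ⟩ with hΨdef
  have hinj : Function.Injective Ψ := by
    rintro ⟨d₁, U₁, h₁⟩ ⟨d₂, U₂, h₂⟩ h
    have hU : U₁ = U₂ := congrArg Subtype.val h
    obtain rfl : d₁ = d₂ := by
      apply Fin.ext
      have e₁ := h₁.2
      have e₂ := h₂.2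
      rw [hU] at e₁
      omega
    subst hU
    rfl
  have hle : Nat.card (Σ d : Fin (ρ+1), T d)
      ≤ Nat.card {U : Submodule F V // finrank F ↥U = r ∧ dI U C ≤ ρ} :=
    Nat.card_le_card_of_injective Ψ hinj
  have hcard : (Nat.card (Σ d : Fin (ρ+1), T d) : ℝ)
      = ∑ d ∈ Finset.range (ρ+1), (Nat.card {U : Submodule F V //
          finrank F ↥U = r ∧ finrank F ↥(U ⊔ C) = r + d} : ℝ) := by
    simp only [Nat.card_eq_fintype_card]
    rw [Fintype.card_sigma]
    push_cast
    rw [← Fin.sum_univ_eq_sum_range (fun d => (Fintype.card {U : Submodule F V //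
        finrank F ↥U = r ∧ finrank F ↥(U ⊔ C) = r + d} : ℝ)) (ρ+1)]
  have hrn : r ≤ n' := by
    rw [← hC, hn']
    exact Submodule.finrank_le C
  have hterm : ∀ d ∈ Finset.range (ρ+1),
      (q : ℝ) ^ (d ^ 2) * gaussBinom q r d * gaussBinom q (n' - r) d
        ≤ (Nat.card {U : Submodule F V //
            finrank F ↥U = r ∧ finrank F ↥(U ⊔ C) = r + d} : ℝ) := by
    intro d hdmem
    have hdρ : d ≤ ρ := by
      have := Finset.mem_range.mp hdmem
      omega
    by_cases hcase : d + r ≤ n'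
    · exact stratum_count hq2 C hC (d := d) (by omega) hcase
    · have : gaussBinom q (n' - r) d = 0 := gaussBinom_eq_zero hq2 (show n' - r < d by omega)
      rw [this, mul_zero]
      positivity
  rw [ballVol]
  calc ∑ d ∈ Finset.range (ρ+1),
        (q : ℝ) ^ (d ^ 2) * gaussBinom q r d * gaussBinom q (n' - r) d
      ≤ ∑ d ∈ Finset.range (ρ+1), (Nat.card {U : Submodule F V //
          finrank F ↥U = r ∧ finrank F ↥(U ⊔ C) = r + d} : ℝ) :=
        Finset.sum_le_sum hterm
    _ = (Nat.card (Σ d : Fin (ρ+1), T d) : ℝ) := by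
        rw [hcard]
    _ ≤ _ := by exact_mod_cast hle

end BallCount

end CDC

/-- Probabilistic upper bound on covering constant-dimension codes. -/
theorem probabilistic_covering_bound (q n r ρ : ℕ) (F : Type*) [Field F] [Fintype F]
    (hq : Fintype.card F = q) (hr : r ≤ n) (hρ : 0 < ρ) (hρr : ρ < r)
    (hV : ballVol q n r ρ < gaussBinom q n r) :
    (∃ 𝒞 : Finset (Submodule F (Fin n → F)),
      (∀ C ∈ 𝒞, Module.finrank F ↥C = r) ∧
      (∀ U : Submodule F (Fin n → F), Module.finrank F ↥U = r → ∃ C ∈ 𝒞, dI U C ≤ ρ) ∧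
      (𝒞.card : ℝ) ≤
        ⌊(-1 : ℝ) / Real.logb (gaussBinom q n r)
            (1 - ballVol q n r ρ / gaussBinom q n r)⌋ + 1) ∧
    (KC F n r ρ : ℝ) ≤
      1 / (1 - Real.logb (gaussBinom q n r) (gaussBinom q n r - ballVol q n r ρ)) + 1 := by
  classical
  subst hq
  set q := Fintype.card F with hqdef
  have hq2 : 2 ≤ q := Fintype.one_lt_card
  have hq2r : (2:ℝ) ≤ (q:ℝ) := by exact_mod_cast hq2
  set Q := gaussBinom q n r with hQdef
  set Vb := ballVol q n r ρ with hVbdef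
  have hfr : Module.finrank F (Fin n → F) = n := Module.finrank_fin_fun F
  -- V_b ≥ 1
  have hVb1 : 1 ≤ Vb := by
    rw [hVbdef, ballVol]
    have hterm0 : ∀ d ∈ Finset.range (ρ+1),
        0 ≤ (q:ℝ)^(d^2) * gaussBinom q r d * gaussBinom q (n-r) d := by
      intro d _
      have h1 := CDC.gaussBinom_nonneg (m := r) (d := d) hq2
      have h2 := CDC.gaussBinom_nonneg (m := n - r) (d := d) hq2
      positivity
    calc (1:ℝ) = (q:ℝ)^(0^2) * gaussBinom q r 0 * gaussBinom q (n-r) 0 := by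
          simp [CDC.gaussBinom_zero']
      _ ≤ _ := Finset.single_le_sum hterm0 (by simp)
  have hQ1 : 1 < Q := lt_of_le_of_lt hVb1 hV
  have hQ0 : (0:ℝ) < Q := by linarith
  have hVb0 : (0:ℝ) < Vb := by linarith
  have ht0 : 0 < 1 - Vb / Q := by
    have : Vb / Q < 1 := (div_lt_one hQ0).mpr hV
    linarith
  have ht1 : 1 - Vb / Q < 1 := by
    have : 0 < Vb / Q := div_pos hVb0 hQ0
    linarith
  set L := Real.logb Q (1 - Vb / Q) with hLdef
  have hL0 : L < 0 := Real.logb_neg hQ1 ht0 ht1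
  have hLne : L ≠ 0 := ne_of_lt hL0
  set x := (-1 : ℝ) / L with hxdef
  have hx0 : 0 < x := div_pos_of_neg_of_neg (by norm_num) hL0
  set K := (⌊x⌋).toNat + 1 with hKdef
  have hKfl : ((K : ℕ) : ℝ) = (⌊x⌋ : ℝ) + 1 := by
    have h1 : (⌊x⌋).toNat = ⌊x⌋ := Int.toNat_of_nonneg (Int.floor_nonneg.mpr (le_of_lt hx0))
    have h2 : ((⌊x⌋.toNat : ℕ) : ℝ) = ((⌊x⌋ : ℤ) : ℝ) := by exact_mod_cast h1
    rw [hKdef, Nat.cast_add, Nat.cast_one, h2]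
  have hKx : x < ((K : ℕ) : ℝ) := by
    rw [hKfl]
    exact Int.lt_floor_add_one x
  -- key analytic inequality
  have hQpow : Q * (Q - Vb) ^ K < Q ^ K := by
    have hKL : ((K:ℕ):ℝ) * L < -1 := by
      have h2 : ((K:ℕ):ℝ) * L < x * L := by
        exact mul_lt_mul_of_neg_right hKx hL0
      rw [hxdef, div_mul_cancel₀ _ hLne] at h2
      exact h2
    have hpow : (1 - Vb / Q) ^ K < Q⁻¹ := by
      have h1 : Real.logb Q ((1 - Vb / Q) ^ K) = ((K:ℕ):ℝ) * L :=
        Real.logb_pow Q (1 - Vb / Q) K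
      have h2 : Real.logb Q (Q⁻¹) = -1 := by
        rw [Real.logb_inv, Real.logb_self_eq_one hQ1]
      have h3 : Real.logb Q ((1 - Vb / Q) ^ K) < Real.logb Q (Q⁻¹) := by
        rw [h1, h2]
        exact hKL
      exact (Real.logb_lt_logb_iff hQ1 (pow_pos ht0 K) (inv_pos.mpr hQ0)).mp h3
    have h4 : Q * (1 - Vb / Q) ^ K < 1 := by
      have := mul_lt_mul_of_pos_left hpow hQ0
      rwa [mul_inv_cancel₀ (ne_of_gt hQ0)] at this
    have h5 : (Q - Vb) ^ K = (1 - Vb / Q) ^ K * Q ^ K := by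
      rw [← mul_pow]
      congr 1
      field_simp
    calc Q * (Q - Vb) ^ K = (Q * (1 - Vb / Q) ^ K) * Q ^ K := by rw [h5]; ring
      _ < 1 * Q ^ K := by
          apply mul_lt_mul_of_pos_right h4 (pow_pos hQ0 K)
      _ = Q ^ K := one_mul _
  -- counting setup
  set G := {U : Submodule F (Fin n → F) // Module.finrank F ↥U = r} with hGdef
  letI : Fintype G := Fintype.ofFinite _
  set M := Fintype.card G with hMdef
  have hMQ : (M : ℝ) = Q := by
    rw [hMdef, ← Nat.card_eq_fintype_card]
    have h := CDC.subspace_count_real (F := F) (V := Fin n → F) hq2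
      (d := r) (by rw [hfr]; exact hr)
    rw [hfr] at h
    rw [h]
  have hball : ∀ U : G,
      Vb ≤ ((Finset.univ.filter fun C0 : G =>
        dI U.1 C0.1 ≤ ρ)).card := by
    intro U
    have h := CDC.ball_count (F := F) (V := Fin n → F) hq2 U.1 U.2 hρr
    rw [hfr] at h
    refine le_trans h ?_
    have e : {U' : Submodule F (Fin n → F) // Module.finrank F ↥U' = r ∧ dI U' U.1 ≤ ρ}
        ≃ {C0 : G // dI U.1 C0.1 ≤ ρ} :=
      { toFun := fun z => ⟨⟨z.1, z.2.1⟩, by rw [CDC.dI_comm]; exact z.2.2⟩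
        invFun := fun y => ⟨y.1.1, y.1.2, by rw [CDC.dI_comm]; exact y.2⟩
        left_inv := fun z => rfl
        right_inv := fun y => rfl }
    rw [Nat.card_congr e, Nat.card_eq_fintype_card, Fintype.card_subtype]
  -- existence of a good tuple
  have hgood : ∃ ω : Fin K → G,
      ∀ U : G,
        ∃ i, dI U.1 (ω i).1 ≤ ρ := by
    by_contra hno
    push_neg at hno
    have hcover : (Finset.univ : Finset (Fin K → G)) ⊆
        Finset.univ.biUnion (fun U : G => Fintype.piFinset
          (fun _ : Fin K => Finset.univ.filter (fun C0 : G => ¬ dI U.1 C0.1 ≤ ρ))) := by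
      intro ω _
      obtain ⟨U, hU⟩ := hno ω
      apply Finset.mem_biUnion.mpr
      refine ⟨U, Finset.mem_univ _, ?_⟩
      rw [Fintype.mem_piFinset]
      intro i
      exact Finset.mem_filter.mpr ⟨Finset.mem_univ _, not_le.mpr (hU i)⟩
    have hcard1 : (M ^ K : ℕ) ≤ ∑ U : G, (Finset.univ.filter
        (fun C0 : G => ¬ dI U.1 C0.1 ≤ ρ)).card ^ K := by
      have h1 := Finset.card_le_card hcover
      rw [Finset.card_univ, Fintype.card_fun, Fintype.card_fin] at h1
      refine le_trans h1 (le_trans Finset.card_biUnion_le (le_of_eq ?_))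
      apply Finset.sum_congr rfl
      intro U _
      rw [Fintype.card_piFinset, Finset.prod_const, Finset.card_univ, Fintype.card_fin]
    -- real-valued bound
    have hreal : ∀ U : G, ((Finset.univ.filter
        (fun C0 : G => ¬ dI U.1 C0.1 ≤ ρ)).card : ℝ) ≤ Q - Vb := by
      intro U
      have hsplit : (Finset.univ.filter (fun C0 : G => dI U.1 C0.1 ≤ ρ)).card
          + (Finset.univ.filter (fun C0 : G => ¬ dI U.1 C0.1 ≤ ρ)).card = M := by
        rw [hMdef, ← Finset.card_univ]
        exact Finset.card_filter_add_card_filter_not _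
      have hb := hball U
      have : ((Finset.univ.filter (fun C0 : G => ¬ dI U.1 C0.1 ≤ ρ)).card : ℝ)
          = (M : ℝ) - ((Finset.univ.filter (fun C0 : G => dI U.1 C0.1 ≤ ρ)).card : ℝ) := by
        have := congrArg (fun t : ℕ => (t : ℝ)) hsplit
        push_cast at this
        linarith
      rw [this, hMQ]
      linarith
    have hchain : ((M : ℝ)) ^ K ≤ Q * (Q - Vb) ^ K := by
      have h1 : ((M ^ K : ℕ) : ℝ) ≤ ∑ U : G, (((Finset.univ.filter
          (fun C0 : G => ¬ dI U.1 C0.1 ≤ ρ)).card : ℝ)) ^ K := by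
        have := hcard1
        calc ((M ^ K : ℕ) : ℝ) ≤ ((∑ U : G, (Finset.univ.filter
            (fun C0 : G => ¬ dI U.1 C0.1 ≤ ρ)).card ^ K : ℕ) : ℝ) := by exact_mod_cast this
          _ = _ := by push_cast; rfl
      have h2 : ∑ U : G, (((Finset.univ.filter
          (fun C0 : G => ¬ dI U.1 C0.1 ≤ ρ)).card : ℝ)) ^ K
          ≤ ∑ _U : G, (Q - Vb) ^ K := by
        apply Finset.sum_le_sum
        intro U _
        exact pow_le_pow_left₀ (Nat.cast_nonneg _) (hreal U) K
      have h3 : ∑ _U : G, (Q - Vb) ^ K = (M : ℝ) * (Q - Vb) ^ K := by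
        rw [Finset.sum_const, Finset.card_univ, nsmul_eq_mul, hMdef]
      have h4 : ((M ^ K : ℕ) : ℝ) = ((M:ℝ)) ^ K := by push_cast; rfl
      rw [h4] at h1
      rw [h3] at h2
      rw [hMQ] at h1 h2 ⊢
      linarith
    rw [hMQ] at hchain
    linarith
  obtain ⟨ω, hω⟩ := hgood
  set 𝒞 : Finset (Submodule F (Fin n → F)) :=
    Finset.image (fun i => (ω i).1) Finset.univ with h𝒞def
  have h1 : ∀ C ∈ 𝒞, Module.finrank F ↥C = r := by
    intro C hC
    obtain ⟨i, _, rfl⟩ := Finset.mem_image.mp hC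
    exact (ω i).2
  have h2 : ∀ U : Submodule F (Fin n → F), Module.finrank F ↥U = r → ∃ C ∈ 𝒞, dI U C ≤ ρ := by
    intro U hU
    obtain ⟨i, hi⟩ := hω ⟨U, hU⟩
    exact ⟨(ω i).1, Finset.mem_image.mpr ⟨i, Finset.mem_univ _, rfl⟩, hi⟩
  have h3 : 𝒞.card ≤ K := by
    refine le_trans Finset.card_image_le ?_
    simp
  have hboundK : (𝒞.card : ℝ) ≤ (⌊x⌋ : ℝ) + 1 := by
    rw [← hKfl]
    exact_mod_cast h3
  constructor
  · exact ⟨𝒞, h1, h2, hboundK⟩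
  · have hKC : KC F n r ρ ≤ 𝒞.card := Nat.sInf_le ⟨𝒞, h1, h2, rfl⟩
    have hx1 : x = 1 / (1 - Real.logb Q (Q - Vb)) := by
      have hQVb : (0:ℝ) < Q - Vb := by linarith
      have hLc : L = Real.logb Q (Q - Vb) - 1 := by
        rw [hLdef]
        have : 1 - Vb / Q = (Q - Vb) / Q := by field_simp
        rw [this, Real.logb_div (ne_of_gt hQVb) (ne_of_gt hQ0),
          Real.logb_self_eq_one hQ1]
      have hden : 1 - Real.logb Q (Q - Vb) ≠ 0 := by
        rw [hLc] at hL0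
        intro h
        have : Real.logb Q (Q - Vb) = 1 := by linarith
        rw [this] at hL0
        norm_num at hL0
      rw [hxdef, hLc]
      rw [div_eq_div_iff (by rw [hLc] at hLne; exact sub_ne_zero.mpr (fun h => hLne (by rw [h]; ring))) hden]
      ring
    calc (KC F n r ρ : ℝ) ≤ (𝒞.card : ℝ) := by exact_mod_cast hKC
      _ ≤ (⌊x⌋ : ℝ) + 1 := hboundK
      _ ≤ x + 1 := by
          have := Int.floor_le x
          linarith
      _ = 1 / (1 - Real.logb Q (Q - Vb)) + 1 := by rw [hx1]
end
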